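/- arXiv:1707.03845 — 3 statements merged into one kernel-verified Lean document; each statement's English description precedes it below -/
import Mathlib

section
/- Let w₀ be an admissible multidegree on (Γ, 𝐧) and, for each v ∈ V(Γ), let w_v ∈ V(G(w₀)) be concentrated at v. Then the graph Ḡ(w₀) is finite. Moreover, if some w = (w_Γ, μ) ∈ V(G(w₀)) satisfies w_Γ(v) ≥ 0 for all v ∈ V(Γ), then w ∈ V(Ḡ(w₀)); in particular Ḡ(w₀) is then nonempty. -/
open scoped Classical

namespace LLS

variable {V E : Type*}

/-- `σ(e,v)`: `1` if `v` is the tail of `e`, `-1` if `v` is the head of `e`, `0` otherwise. -/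
noncomputable def sigma (tail head : E → V) (e : E) (v : V) : ℤ :=
  if tail e = v then 1 else if head e = v then -1 else 0

/-- The endpoint of `e` other than `v` (for `e` adjacent to `v`). -/
noncomputable def otherEnd (tail head : E → V) (e : E) (v : V) : V :=
  if tail e = v then head e else tail e

/-- The multigraph is loopless. -/
def Loopless (tail head : E → V) : Prop := ∀ e, tail e ≠ head e

/-- The multigraph is connected. -/
def MGConnected (tail head : E → V) : Prop :=
  ∀ u v : V, Relation.ReflTransGen
    (fun a b => ∃ e, (tail e = a ∧ head e = b) ∨ (tail e = b ∧ head e = a)) u v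

/-- An admissible multidegree on `(Γ, 𝐧)`: a function `V(Γ) → ℤ` together with an
element `μ(e) ∈ ℤ/𝐧(e)ℤ` for each edge `e`. -/
structure AdmMD (V E : Type*) (n : E → ℕ) where
  wV : V → ℤ
  mu : ∀ e : E, ZMod (n e)

section FinGraph

variable [Fintype V] [Fintype E] [DecidableEq V] [DecidableEq E]

/-- The twist of an admissible multidegree at a vertex `v`. -/
noncomputable def twist (tail head : E → V) (n : E → ℕ) (w : AdmMD V E n) (v : V) :
    AdmMD V E n where
  wV u := w.wV u
    - (if u = v then ((Finset.univ.filter fun e : E =>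
        sigma tail head e v ≠ 0 ∧ w.mu e = 0).card : ℤ) else 0)
    + ((Finset.univ.filter fun e : E => sigma tail head e v ≠ 0 ∧
        w.mu e + (sigma tail head e v : ZMod (n e)) = 0 ∧
        otherEnd tail head e v = u).card : ℤ)
  mu e := w.mu e + (sigma tail head e v : ZMod (n e))

/-- The negative twist of an admissible multidegree at a vertex `v`
(the inverse of `twist`). -/
noncomputable def negTwist (tail head : E → V) (n : E → ℕ) (w : AdmMD V E n) (v : V) :
    AdmMD V E n where
  wV u := w.wV u
    + (if u = v then ((Finset.univ.filter fun e : E => sigma tail head e v ≠ 0 ∧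
        w.mu e - (sigma tail head e v : ZMod (n e)) = 0).card : ℤ) else 0)
    - ((Finset.univ.filter fun e : E => sigma tail head e v ≠ 0 ∧
        w.mu e = 0 ∧ otherEnd tail head e v = u).card : ℤ)
  mu e := w.mu e - (sigma tail head e v : ZMod (n e))

/-- An admissible multidegree is concentrated at `v` if there is an ordering of all
vertices starting with `v` such that composing the negative twists at all previous
vertices makes the multidegree negative at each subsequent vertex. -/
def Concentrated (tail head : E → V) (n : E → ℕ) (w : AdmMD V E n) (v : V) : Prop :=
  ∃ l : List V, l.Nodup ∧ (∀ x : V, x ∈ l) ∧ l.head? = some v ∧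
    ∀ (i : ℕ) (h : i < l.length), 0 < i →
      (((l.take i).foldl (negTwist tail head n) w).wV (l.get ⟨i, h⟩)) < 0

/-- `w` is obtained from `w₀` by a finite sequence of twists, i.e. `w ∈ V(G(w₀))`. -/
def TwistSeq (tail head : E → V) (n : E → ℕ) (w₀ w : AdmMD V E n) : Prop :=
  ∃ l : List V, l.foldl (twist tail head n) w₀ = w

/-- `l` records the successive twist vertices of a minimal path from `w` to `w'`
in `G(w₀)`. -/
def IsMinPath (tail head : E → V) (n : E → ℕ) (w w' : AdmMD V E n) (l : List V) : Prop :=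
  l.foldl (twist tail head n) w = w' ∧
    ∀ l' : List V, l'.foldl (twist tail head n) w = w' → l.length ≤ l'.length

/-- The membership condition describing the subgraph `Ḡ(w₀)` of `G(w₀)`:
no minimal path from `w` to `w_v` involves twisting at `v`. -/
def InBarG (tail head : E → V) (n : E → ℕ) (w₀ : AdmMD V E n) (wv : V → AdmMD V E n)
    (w : AdmMD V E n) : Prop :=
  TwistSeq tail head n w₀ w ∧
    ∀ (v : V) (l : List V), IsMinPath tail head n w (wv v) l → v ∉ l

/-- Edges joining `v` and `u`. -/
noncomputable def edgesBetween (tail head : E → V) (v u : V) : Finset E :=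
  Finset.univ.filter fun e => (tail e = v ∧ head e = u) ∨ (head e = v ∧ tail e = u)

/-- Edges adjacent to `v`. -/
noncomputable def edgesAdj (tail head : E → V) (v : V) : Finset E :=
  Finset.univ.filter fun e => tail e = v ∨ head e = v

/-- The change of a divisor effected by a single chip-firing move at `v`. -/
noncomputable def fireDelta (tail head : E → V) (v : V) : V → ℤ := fun u =>
  ((edgesBetween tail head v u).card : ℤ)
    - (if u = v then ((edgesAdj tail head v).card : ℤ) else 0)

/-- A chip-firing move (twist) at `v`. -/
noncomputable def chipFire (tail head : E → V) (D : V → ℤ) (v : V) : V → ℤ :=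
  fun u => D u + fireDelta tail head v u

/-- The inverse of a chip-firing move at `v`. -/
noncomputable def negChipFire (tail head : E → V) (D : V → ℤ) (v : V) : V → ℤ :=
  fun u => D u - fireDelta tail head v u

/-- A divisor (multidegree) on a graph is concentrated at `v`. -/
def ConcentratedDiv (tail head : E → V) (D : V → ℤ) (v : V) : Prop :=
  ∃ l : List V, l.Nodup ∧ (∀ x : V, x ∈ l) ∧ l.head? = some v ∧
    ∀ (i : ℕ) (h : i < l.length), 0 < i →
      (((l.take i).foldl (negChipFire tail head) D) (l.get ⟨i, h⟩)) < 0

/-- A divisor on a graph is `v₀`-reduced. -/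
def VReduced (tail head : E → V) (D : V → ℤ) (v₀ : V) : Prop :=
  (∀ u, u ≠ v₀ → 0 ≤ D u) ∧
    ∀ S : Finset V, S.Nonempty → v₀ ∉ S →
      ∃ v ∈ S, D v < ((Finset.univ.filter fun e : E =>
        (tail e = v ∧ head e ∉ S) ∨ (head e = v ∧ tail e ∉ S)).card : ℤ)

/-- The function `D_{w,v}` on edges of `Γ` determined by a path `l` from `w` to `w_v`. -/
noncomputable def DFun (tail head : E → V) (n : E → ℕ) (w : AdmMD V E n) (l : List V)
    (v : V) (et : E) : ℤ :=
  (((Finset.univ : Finset (Fin l.length)).filter fun j =>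
      l.get j = otherEnd tail head et v ∧
        ((l.take (j.val + 1)).foldl (twist tail head n) w).mu et = 0).card : ℤ)
  - (((Finset.univ : Finset (Fin l.length)).filter fun j =>
      l.get j = v ∧ ((l.take j.val).foldl (twist tail head n) w).mu et = 0).card : ℤ)

end FinGraph

/-- The tail map of the subdivided graph `Γ̃`: the edge `e` of `Γ` is subdivided into
`𝐧(e)` edges `(e, j)`, `j = 0, …, 𝐧(e) - 1`, numbered from the tail of `e`; the new
vertices over `e` are `(e, i)`, `i = 0, …, 𝐧(e) - 2`, with `(e, i)` being the
`(i+1)`-st new vertex from the tail of `e`. -/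
def tailT (tail head : E → V) (n : E → ℕ) :
    (Σ e : E, Fin (n e)) → V ⊕ Σ e : E, Fin (n e - 1) := fun p =>
  if h : p.2.val = 0 then Sum.inl (tail p.1)
  else Sum.inr ⟨p.1, ⟨p.2.val - 1, by have := p.2.isLt; omega⟩⟩

/-- The head map of the subdivided graph `Γ̃`. -/
def headT (tail head : E → V) (n : E → ℕ) :
    (Σ e : E, Fin (n e)) → V ⊕ Σ e : E, Fin (n e - 1) := fun p =>
  if h : p.2.val = n p.1 - 1 then Sum.inl (head p.1)
  else Sum.inr ⟨p.1, ⟨p.2.val, by have := p.2.isLt; omega⟩⟩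

/-- The multidegree on the subdivided graph `Γ̃` induced by an admissible multidegree:
it agrees with `w` on old vertices, is `1` on the `μ(e)`-th new vertex over `e`
when `μ(e) ≠ 0`, and is `0` on all other new vertices. -/
noncomputable def inducedMD (n : E → ℕ) (w : AdmMD V E n) :
    (V ⊕ Σ e : E, Fin (n e - 1)) → ℤ
  | Sum.inl v => w.wV v
  | Sum.inr ⟨e, i⟩ => if (w.mu e).val = i.val + 1 then 1 else 0

/-- The simple graph `Γ̄` associated to the multigraph `Γ`: same vertices, one edge
between each pair of adjacent vertices. -/
def barGraph (tail head : E → V) : SimpleGraph V where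
  Adj u v := u ≠ v ∧ ∃ e, (tail e = u ∧ head e = v) ∨ (tail e = v ∧ head e = u)
  symm := by
    constructor
    intro u v h
    exact ⟨h.1.symm, h.2.imp fun e he => he.symm⟩
  loopless := ⟨fun u h => h.1 rfl⟩



/-! ### Auxiliary development -/

section Aux

theorem ediv_step {N t : ℤ} (hN : 0 < N) :
    t / N - (t - 1) / N = if N ∣ t then 1 else 0 := by
  have h := Int.mul_ediv_add_emod t N
  have h1 : 0 ≤ t % N := Int.emod_nonneg t hN.ne'
  have h2 : t % N < N := Int.emod_lt_of_pos t hN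
  by_cases hd : N ∣ t
  · have hr : t % N = 0 := Int.emod_eq_zero_of_dvd hd
    have e2 : (t - 1) / N = (N - 1) / N + (t / N - 1) := by
      rw [show t - 1 = (N - 1) + (t / N - 1) * N by linarith [h]]
      exact Int.add_mul_ediv_right _ _ hN.ne'
    have e3 : (N - 1) / N = 0 := Int.ediv_eq_zero_of_lt (by omega) (by omega)
    simp [hd, e2, e3]
  · have hr : t % N ≠ 0 := fun hc => hd (Int.dvd_of_emod_eq_zero hc)
    have e1 : t / N = (t % N) / N + t / N := by
      nth_rewrite 1 [show t = t % N + (t / N) * N by linarith [h]]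
      exact Int.add_mul_ediv_right _ _ hN.ne'
    have e2 : (t - 1) / N = (t % N - 1) / N + t / N := by
      rw [show t - 1 = (t % N - 1) + (t / N) * N by linarith [h]]
      exact Int.add_mul_ediv_right _ _ hN.ne'
    have e3 : (t % N) / N = 0 := Int.ediv_eq_zero_of_lt (by omega) h2
    have e4 : (t % N - 1) / N = 0 := Int.ediv_eq_zero_of_lt (by omega) (by omega)
    simp only [hd, if_false]
    omega

theorem ediv_shift (a : ℤ) {N : ℤ} (hN : N ≠ 0) (q : ℤ) :
    (a + q * N) / N = a / N + q :=
  Int.add_mul_ediv_right a q hN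

variable [Fintype V] [Fintype E] [DecidableEq V] [DecidableEq E]

theorem AdmMD.ext' {n : E → ℕ} {w w' : AdmMD V E n}
    (h1 : ∀ v, w.wV v = w'.wV v) (h2 : ∀ e, w.mu e = w'.mu e) : w = w' := by
  cases w; cases w'
  congr 1
  · exact funext h1
  · exact funext h2

variable (tail head : E → V) (n : E → ℕ)

/-- Per-edge contribution to the degree change under a twisting script `x`. -/
noncomputable def edgeC (w : AdmMD V E n) (x : V → ℤ) (u : V) (e : E) : ℤ :=
  if tail e = u then
    (((w.mu e).val : ℤ) - 1) / (n e : ℤ)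
      - (((w.mu e).val : ℤ) + (x (tail e) - x (head e)) - 1) / (n e : ℤ)
  else if head e = u then
    (((w.mu e).val : ℤ) + (x (tail e) - x (head e))) / (n e : ℤ)
      - ((w.mu e).val : ℤ) / (n e : ℤ)
  else 0

/-- The result of applying the twisting script `x` to `w`. -/
noncomputable def Phi (w : AdmMD V E n) (x : V → ℤ) : AdmMD V E n where
  wV u := w.wV u + ∑ e, edgeC tail head n w x u e
  mu e := w.mu e + (((x (tail e) - x (head e)) : ℤ) : ZMod (n e))

theorem mu_eq_cast (hn : ∀ e, 0 < n e) (w : AdmMD V E n) (e : E) :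
    w.mu e = (((w.mu e).val : ℤ) : ZMod (n e)) := by
  haveI : NeZero (n e) := ⟨(hn e).ne'⟩
  push_cast
  exact (ZMod.natCast_rightInverse (w.mu e)).symm

theorem Phi_mu_add_eq_zero_iff (hn : ∀ e, 0 < n e) (w : AdmMD V E n) (x : V → ℤ)
    (e : E) (s : ℤ) :
    (Phi tail head n w x).mu e + ((s : ℤ) : ZMod (n e)) = 0 ↔
      (n e : ℤ) ∣ (((w.mu e).val : ℤ) + (x (tail e) - x (head e)) + s) := by
  haveI : NeZero (n e) := ⟨(hn e).ne'⟩
  have hm : (((w.mu e).val : ℤ) : ZMod (n e)) = w.mu e := by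
    push_cast
    exact ZMod.natCast_rightInverse (w.mu e)
  show w.mu e + _ + _ = 0 ↔ _
  conv_lhs => rw [← hm]
  rw [← Int.cast_add, ← Int.cast_add, ZMod.intCast_zmod_eq_zero_iff_dvd]

theorem Phi_mu_eq_zero_iff (hn : ∀ e, 0 < n e) (w : AdmMD V E n) (x : V → ℤ) (e : E) :
    (Phi tail head n w x).mu e = 0 ↔
      (n e : ℤ) ∣ (((w.mu e).val : ℤ) + (x (tail e) - x (head e))) := by
  have := Phi_mu_add_eq_zero_iff tail head n hn w x e 0
  simpa using this

theorem sigma_ne_zero_iff (e : E) (v : V) :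
    sigma tail head e v ≠ 0 ↔ (tail e = v ∨ head e = v) := by
  unfold sigma
  split_ifs <;> simp_all

theorem Phi_zero (w : AdmMD V E n) : Phi tail head n w (fun _ => 0) = w := by
  apply AdmMD.ext'
  · intro u
    show w.wV u + _ = w.wV u
    rw [add_eq_left]
    apply Finset.sum_eq_zero
    intro e _
    unfold edgeC
    split_ifs <;> simp
  · intro e
    show w.mu e + _ = w.mu e
    simp

theorem Phi_congr (w : AdmMD V E n) (x y : V → ℤ)
    (h : ∀ e, x (tail e) - x (head e) = y (tail e) - y (head e)) :
    Phi tail head n w x = Phi tail head n w y := by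
  apply AdmMD.ext'
  · intro u
    show w.wV u + _ = w.wV u + _
    congr 1
    apply Finset.sum_congr rfl
    intro e _
    unfold edgeC
    rw [h e]
  · intro e
    show w.mu e + _ = w.mu e + _
    rw [h e]

theorem edgeC_twist (hloop : Loopless tail head) (hn : ∀ e, 0 < n e)
    (w : AdmMD V E n) (x : V → ℤ) (v u : V) (e : E) :
    edgeC tail head n w (fun t => x t + if t = v then 1 else 0) u e
      = edgeC tail head n w x u e
        - (if u = v then
            (if sigma tail head e v ≠ 0 ∧ (Phi tail head n w x).mu e = 0
              then 1 else 0) else 0)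
        + (if sigma tail head e v ≠ 0 ∧
              (Phi tail head n w x).mu e + (sigma tail head e v : ZMod (n e)) = 0 ∧
              otherEnd tail head e v = u then 1 else 0) := by
  have hN : (0:ℤ) < (n e : ℤ) := by exact_mod_cast hn e
  set m : ℤ := ((w.mu e).val : ℤ) with hm
  set N : ℤ := ((n e : ℕ) : ℤ) with hNdef
  set d : ℤ := x (tail e) - x (head e) with hd
  have hmu0 : ((Phi tail head n w x).mu e = 0) ↔ N ∣ m + d :=
    Phi_mu_eq_zero_iff tail head n hn w x e
  have hmup : ((Phi tail head n w x).mu e + ((1:ℤ) : ZMod (n e)) = 0) ↔ N ∣ m + d + 1 :=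
    Phi_mu_add_eq_zero_iff tail head n hn w x e 1
  have hmum : ((Phi tail head n w x).mu e + ((-1:ℤ) : ZMod (n e)) = 0) ↔ N ∣ m + d - 1 := by
    rw [Phi_mu_add_eq_zero_iff tail head n hn w x e (-1),
      show m + d + (-1) = m + d - 1 by ring]
  by_cases ha : tail e = v
  · have hb : head e ≠ v := fun hc => hloop e (ha.trans hc.symm)
    have hσ : sigma tail head e v = 1 := by unfold sigma; rw [if_pos ha]
    have hσne : sigma tail head e v ≠ 0 := by rw [hσ]; norm_num
    have hoth : otherEnd tail head e v = head e := by unfold otherEnd; rw [if_pos ha]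
    have hx' : (x (tail e) + if tail e = v then (1:ℤ) else 0)
        - (x (head e) + if head e = v then (1:ℤ) else 0) = d + 1 := by
      rw [if_pos ha, if_neg hb, hd]; ring
    unfold edgeC
    simp only [hx']
    by_cases hu1 : tail e = u
    · have huv : u = v := hu1.symm.trans ha
      have hbu : head e ≠ u := fun hc => hloop e (hu1.trans hc.symm)
      rw [if_pos hu1, if_pos hu1, if_pos huv,
        if_neg (fun hc => hbu (hoth ▸ hc.2.2) :
          ¬(sigma tail head e v ≠ 0 ∧ _ ∧ otherEnd tail head e v = u))]
      have hstep := ediv_step (t := m + d) hN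
      by_cases hdd : N ∣ m + d
      · rw [if_pos ⟨hσne, hmu0.mpr hdd⟩]
        rw [if_pos hdd] at hstep
        rw [show m + (d + 1) - 1 = m + d by ring]
        linarith
      · rw [if_neg (fun hc => hdd (hmu0.mp hc.2))]
        rw [if_neg hdd] at hstep
        rw [show m + (d + 1) - 1 = m + d by ring]
        linarith
    · by_cases hu2 : head e = u
      · have huv : u ≠ v := fun hc => hb (hu2.trans hc)
        rw [if_neg hu1, if_neg hu1, if_pos hu2, if_pos hu2, if_neg huv]
        have hstep := ediv_step (t := m + d + 1) hN
        rw [show m + d + 1 - 1 = m + d by ring] at hstep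
        by_cases hdd : N ∣ m + d + 1
        · rw [if_pos ⟨hσne, by rw [hσ]; exact hmup.mpr hdd, hoth.trans hu2⟩]
          rw [if_pos hdd] at hstep
          rw [show m + (d + 1) = m + d + 1 by ring]
          linarith
        · rw [if_neg (fun hc => hdd (hmup.mp (by rw [← hσ]; exact hc.2.1)))]
          rw [if_neg hdd] at hstep
          rw [show m + (d + 1) = m + d + 1 by ring]
          linarith
      · have huv : u ≠ v := fun hc => hu1 (ha.trans hc.symm)
        rw [if_neg hu1, if_neg hu1, if_neg hu2, if_neg hu2, if_neg huv,
          if_neg (fun hc => hu2 (hoth ▸ hc.2.2) :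
            ¬(sigma tail head e v ≠ 0 ∧ _ ∧ otherEnd tail head e v = u))]
        ring
  · by_cases hb : head e = v
    · have hσ : sigma tail head e v = -1 := by unfold sigma; rw [if_neg ha, if_pos hb]
      have hσne : sigma tail head e v ≠ 0 := by rw [hσ]; norm_num
      have hoth : otherEnd tail head e v = tail e := by unfold otherEnd; rw [if_neg ha]
      have hx' : (x (tail e) + if tail e = v then (1:ℤ) else 0)
          - (x (head e) + if head e = v then (1:ℤ) else 0) = d - 1 := by
        rw [if_pos hb, if_neg ha, hd]; ring
      unfold edgeC
      simp only [hx']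
      by_cases hu2 : head e = u
      · have huv : u = v := hu2.symm.trans hb
        have hau : tail e ≠ u := fun hc => hloop e (hc.trans hu2.symm)
        rw [if_neg hau, if_neg hau, if_pos hu2, if_pos hu2, if_pos huv,
          if_neg (fun hc => hau (hoth ▸ hc.2.2) :
            ¬(sigma tail head e v ≠ 0 ∧ _ ∧ otherEnd tail head e v = u))]
        have hstep := ediv_step (t := m + d) hN
        by_cases hdd : N ∣ m + d
        · rw [if_pos ⟨hσne, hmu0.mpr hdd⟩]
          rw [if_pos hdd] at hstep
          rw [show m + (d - 1) = m + d - 1 by ring]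
          linarith
        · rw [if_neg (fun hc => hdd (hmu0.mp hc.2))]
          rw [if_neg hdd] at hstep
          rw [show m + (d - 1) = m + d - 1 by ring]
          linarith
      · by_cases hu1 : tail e = u
        · have huv : u ≠ v := fun hc => ha (hu1.trans hc)
          rw [if_pos hu1, if_pos hu1, if_neg huv]
          have hstep := ediv_step (t := m + d - 1) hN
          by_cases hdd : N ∣ m + d - 1
          · rw [if_pos ⟨hσne, by rw [hσ]; exact hmum.mpr hdd, hoth.trans hu1⟩]
            rw [if_pos hdd] at hstep
            rw [show m + (d - 1) - 1 = m + d - 1 - 1 by ring]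
            linarith
          · rw [if_neg (fun hc => hdd (hmum.mp (by rw [← hσ]; exact hc.2.1)))]
            rw [if_neg hdd] at hstep
            rw [show m + (d - 1) - 1 = m + d - 1 - 1 by ring]
            linarith
        · have huv : u ≠ v := fun hc => hu2 (hb.trans hc.symm)
          rw [if_neg hu1, if_neg hu1, if_neg hu2, if_neg hu2, if_neg huv,
            if_neg (fun hc => hu1 (hoth ▸ hc.2.2) :
              ¬(sigma tail head e v ≠ 0 ∧ _ ∧ otherEnd tail head e v = u))]
          ring
    · have hσ : sigma tail head e v = 0 := by unfold sigma; rw [if_neg ha, if_neg hb]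
      have hx' : (x (tail e) + if tail e = v then (1:ℤ) else 0)
          - (x (head e) + if head e = v then (1:ℤ) else 0) = d := by
        rw [if_neg ha, if_neg hb, hd]; ring
      unfold edgeC
      simp only [hx']
      rw [if_neg (fun hc => hc.1 hσ : ¬(sigma tail head e v ≠ 0 ∧ _)),
        if_neg (fun hc => hc.1 hσ :
          ¬(sigma tail head e v ≠ 0 ∧ _ ∧ otherEnd tail head e v = u))]
      simp [hd]

theorem sigma_eq_sub (hloop : Loopless tail head) (e : E) (v : V) :
    sigma tail head e v
      = (if tail e = v then (1:ℤ) else 0) - (if head e = v then (1:ℤ) else 0) := by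
  unfold sigma
  by_cases ha : tail e = v
  · have hb : head e ≠ v := fun hc => hloop e (ha.trans hc.symm)
    rw [if_pos ha, if_pos ha, if_neg hb]; ring
  · by_cases hb : head e = v
    · rw [if_neg ha, if_neg ha, if_pos hb, if_pos hb]; ring
    · rw [if_neg ha, if_neg ha, if_neg hb, if_neg hb]; ring

theorem twist_Phi (hloop : Loopless tail head) (hn : ∀ e, 0 < n e)
    (w : AdmMD V E n) (x : V → ℤ) (v : V) :
    twist tail head n (Phi tail head n w x) v
      = Phi tail head n w (fun t => x t + if t = v then 1 else 0) := by
  apply AdmMD.ext'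
  · intro u
    show (Phi tail head n w x).wV u
        - (if u = v then ((Finset.univ.filter fun e : E =>
            sigma tail head e v ≠ 0 ∧ (Phi tail head n w x).mu e = 0).card : ℤ) else 0)
        + ((Finset.univ.filter fun e : E => sigma tail head e v ≠ 0 ∧
            (Phi tail head n w x).mu e + (sigma tail head e v : ZMod (n e)) = 0 ∧
            otherEnd tail head e v = u).card : ℤ)
      = (Phi tail head n w (fun t => x t + if t = v then 1 else 0)).wV u
    show (w.wV u + ∑ e, edgeC tail head n w x u e) - _ + _
      = w.wV u + ∑ e, edgeC tail head n w (fun t => x t + if t = v then 1 else 0) u e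
    rw [Finset.sum_congr rfl (fun e _ => edgeC_twist tail head n hloop hn w x v u e)]
    rw [Finset.sum_add_distrib, Finset.sum_sub_distrib]
    rw [Finset.card_filter, Finset.card_filter]
    push_cast
    by_cases huv : u = v
    · simp only [if_pos huv]
      ring
    · simp only [if_neg huv, Finset.sum_const_zero]
      ring
  · intro e
    show (Phi tail head n w x).mu e + (sigma tail head e v : ZMod (n e))
      = (Phi tail head n w (fun t => x t + if t = v then 1 else 0)).mu e
    show w.mu e + _ + _ = w.mu e + _
    rw [add_assoc, sigma_eq_sub tail head hloop e v, ← Int.cast_add]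
    congr 2
    ring

theorem Phi_add (hn : ∀ e, 0 < n e) (w : AdmMD V E n) (x y : V → ℤ) :
    Phi tail head n (Phi tail head n w x) y = Phi tail head n w (fun t => x t + y t) := by
  apply AdmMD.ext'
  · intro u
    show ((w.wV u + ∑ e, edgeC tail head n w x u e)
        + ∑ e, edgeC tail head n (Phi tail head n w x) y u e)
      = w.wV u + ∑ e, edgeC tail head n w (fun t => x t + y t) u e
    rw [add_assoc, ← Finset.sum_add_distrib]
    congr 1
    apply Finset.sum_congr rfl
    intro e _
    have hN : (0:ℤ) < (n e : ℤ) := by exact_mod_cast hn e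
    haveI : NeZero (n e) := ⟨(hn e).ne'⟩
    set m : ℤ := ((w.mu e).val : ℤ) with hm
    set m' : ℤ := (((Phi tail head n w x).mu e).val : ℤ) with hm'
    set N : ℤ := ((n e : ℕ) : ℤ) with hNdef
    set dx : ℤ := x (tail e) - x (head e) with hdx
    set dy : ℤ := y (tail e) - y (head e) with hdy
    have hmod : m' = (m + dx) % N := by
      rw [hm']
      have hmue : (Phi tail head n w x).mu e = (((m + dx : ℤ)) : ZMod (n e)) := by
        show w.mu e + _ = _
        rw [mu_eq_cast n hn w e, ← Int.cast_add]
      rw [hmue, ZMod.val_intCast]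
    have key : m + dx = m' + ((m + dx) / N) * N := by
      have := Int.mul_ediv_add_emod (m + dx) N
      rw [← hmod] at this
      linarith
    set q : ℤ := (m + dx) / N with hq
    have hxy : (x (tail e) + y (tail e)) - (x (head e) + y (head e)) = dx + dy := by
      rw [hdx, hdy]; ring
    unfold edgeC
    simp only [hxy]
    by_cases hu1 : tail e = u
    · rw [if_pos hu1, if_pos hu1, if_pos hu1]
      have k1 : (m + dx - 1) / N = (m' - 1) / N + q := by
        rw [show m + dx - 1 = (m' - 1) + q * N by linarith]
        exact ediv_shift _ hN.ne' q
      have k2 : (m + (dx + dy) - 1) / N = (m' + dy - 1) / N + q := by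
        rw [show m + (dx + dy) - 1 = (m' + dy - 1) + q * N by linarith]
        exact ediv_shift _ hN.ne' q
      linarith
    · by_cases hu2 : head e = u
      · rw [if_neg hu1, if_neg hu1, if_neg hu1, if_pos hu2, if_pos hu2, if_pos hu2]
        have k3 : (m + dx) / N = m' / N + q := by
          rw [show m + dx = m' + q * N by linarith]
          exact ediv_shift _ hN.ne' q
        have k4 : (m + (dx + dy)) / N = (m' + dy) / N + q := by
          rw [show m + (dx + dy) = (m' + dy) + q * N by linarith]
          exact ediv_shift _ hN.ne' q
        linarith
      · rw [if_neg hu1, if_neg hu1, if_neg hu1, if_neg hu2, if_neg hu2, if_neg hu2]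
        ring
  · intro e
    show w.mu e + _ + _ = w.mu e + _
    rw [add_assoc, ← Int.cast_add]
    congr 2
    ring

theorem negTwist_twist (w : AdmMD V E n) (v : V) :
    negTwist tail head n (twist tail head n w v) v = w := by
  apply AdmMD.ext'
  · intro u
    show (twist tail head n w v).wV u
        + (if u = v then ((Finset.univ.filter fun e : E => sigma tail head e v ≠ 0 ∧
            (twist tail head n w v).mu e - (sigma tail head e v : ZMod (n e)) = 0).card : ℤ)
          else 0)
        - ((Finset.univ.filter fun e : E => sigma tail head e v ≠ 0 ∧
            (twist tail head n w v).mu e = 0 ∧ otherEnd tail head e v = u).card : ℤ)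
      = w.wV u
    have hf1 : (Finset.univ.filter fun e : E => sigma tail head e v ≠ 0 ∧
          (twist tail head n w v).mu e - (sigma tail head e v : ZMod (n e)) = 0)
        = (Finset.univ.filter fun e : E => sigma tail head e v ≠ 0 ∧ w.mu e = 0) := by
      apply Finset.filter_congr
      intro e _
      apply and_congr_right
      intro _
      show w.mu e + _ - _ = 0 ↔ _
      rw [add_sub_cancel_right]
    have hf2 : (Finset.univ.filter fun e : E => sigma tail head e v ≠ 0 ∧
          (twist tail head n w v).mu e = 0 ∧ otherEnd tail head e v = u)
        = (Finset.univ.filter fun e : E => sigma tail head e v ≠ 0 ∧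
            w.mu e + (sigma tail head e v : ZMod (n e)) = 0 ∧ otherEnd tail head e v = u) := by
      apply Finset.filter_congr
      intro e _
      exact Iff.rfl
    rw [hf1, hf2]
    show w.wV u - _ + _ + _ - _ = w.wV u
    ring
  · intro e
    show (twist tail head n w v).mu e - _ = w.mu e
    show w.mu e + _ - _ = w.mu e
    rw [add_sub_cancel_right]

theorem negTwist_Phi (hloop : Loopless tail head) (hn : ∀ e, 0 < n e)
    (w : AdmMD V E n) (x : V → ℤ) (v : V) :
    negTwist tail head n (Phi tail head n w x) v
      = Phi tail head n w (fun t => x t - if t = v then 1 else 0) := by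
  have h := twist_Phi tail head n hloop hn w (fun t => x t - if t = v then 1 else 0) v
  have h2 : Phi tail head n w
        (fun t => (x t - if t = v then 1 else 0) + if t = v then 1 else 0)
      = Phi tail head n w x := by
    apply Phi_congr
    intro e
    ring
  rw [h2] at h
  rw [← h, negTwist_twist]

theorem foldl_twist (hloop : Loopless tail head) (hn : ∀ e, 0 < n e)
    (w : AdmMD V E n) (l : List V) :
    l.foldl (twist tail head n) w = Phi tail head n w (fun t => (l.count t : ℤ)) := by
  induction l generalizing w with
  | nil =>
    show w = _
    rw [show (fun t : V => ((List.count t ([] : List V) : ℕ) : ℤ)) = fun _ => (0:ℤ) from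
      funext fun t => by simp]
    exact (Phi_zero tail head n w).symm
  | cons a l ih =>
    show l.foldl _ (twist tail head n w a) = _
    rw [ih]
    conv_lhs => rw [show twist tail head n w a
      = Phi tail head n w (fun t => (0:ℤ) + if t = a then 1 else 0) from by
        rw [← twist_Phi tail head n hloop hn w (fun _ => 0) a, Phi_zero]]
    rw [Phi_add tail head n hn]
    congr 1
    funext t
    rw [List.count_cons]
    push_cast
    by_cases h : t = a
    · simp [h]
      try ring
    · simp [h, Ne.symm h]

theorem foldl_negTwist (hloop : Loopless tail head) (hn : ∀ e, 0 < n e)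
    (w : AdmMD V E n) (l : List V) :
    l.foldl (negTwist tail head n) w = Phi tail head n w (fun t => -(l.count t : ℤ)) := by
  induction l generalizing w with
  | nil =>
    show w = _
    rw [show (fun t : V => -((List.count t ([] : List V) : ℕ) : ℤ)) = fun _ => (0:ℤ) from
      funext fun t => by simp]
    exact (Phi_zero tail head n w).symm
  | cons a l ih =>
    show l.foldl _ (negTwist tail head n w a) = _
    rw [ih]
    conv_lhs => rw [show negTwist tail head n w a
      = Phi tail head n w (fun t => (0:ℤ) - if t = a then 1 else 0) from by
        rw [← negTwist_Phi tail head n hloop hn w (fun _ => 0) a, Phi_zero]]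
    rw [Phi_add tail head n hn]
    congr 1
    funext t
    rw [List.count_cons]
    push_cast
    by_cases h : t = a
    · simp [h]
      try ring
    · simp [h, Ne.symm h]

theorem Phi_wV_eq (w : AdmMD V E n) (x : V → ℤ) (u : V) :
    (Phi tail head n w x).wV u = w.wV u + ∑ e, edgeC tail head n w x u e := rfl

theorem Phi_kernel (hconn : MGConnected tail head) (hn : ∀ e, 0 < n e)
    (w : AdmMD V E n) (x y : V → ℤ) (h : Phi tail head n w x = Phi tail head n w y) :
    ∃ c : ℤ, ∀ u, x u = y u + c := by
  cases isEmpty_or_nonempty V with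
  | inl hV => exact ⟨0, fun u => isEmptyElim u⟩
  | inr hV =>
    have hdvd : ∀ e, (n e : ℤ) ∣
        ((x (tail e) - y (tail e)) - (x (head e) - y (head e))) := by
      intro e
      haveI : NeZero (n e) := ⟨(hn e).ne'⟩
      have hmu : (Phi tail head n w x).mu e = (Phi tail head n w y).mu e := by rw [h]
      have hmu2 : ((x (tail e) - x (head e) : ℤ) : ZMod (n e))
          = ((y (tail e) - y (head e) : ℤ) : ZMod (n e)) := add_left_cancel hmu
      rw [← ZMod.intCast_zmod_eq_zero_iff_dvd,
        show ((x (tail e) - y (tail e)) - (x (head e) - y (head e)))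
          = (x (tail e) - x (head e)) - (y (tail e) - y (head e)) by ring]
      push_cast
      push_cast at hmu2
      rw [hmu2]
      ring
    set ξ : V → ℤ := fun u => x u - y u with hξ
    obtain ⟨vm, _, hmax⟩ := Finset.exists_max_image Finset.univ ξ
      ⟨Classical.arbitrary V, Finset.mem_univ _⟩
    have hstep : ∀ a b : V, ξ a = ξ vm →
        (∃ e, (tail e = a ∧ head e = b) ∨ (tail e = b ∧ head e = a)) → ξ b = ξ vm := by
      intro a b ha hab
      have hsum : ∑ e, (edgeC tail head n w x a e - edgeC tail head n w y a e) = 0 := by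
        have hw : (Phi tail head n w x).wV a = (Phi tail head n w y).wV a := by rw [h]
        rw [Phi_wV_eq, Phi_wV_eq] at hw
        rw [Finset.sum_sub_distrib]
        omega
      have hterm : ∀ e : E, (edgeC tail head n w x a e - edgeC tail head n w y a e ≤ 0)
          ∧ (edgeC tail head n w x a e - edgeC tail head n w y a e = 0 →
              (tail e = a → ξ (head e) = ξ a) ∧ (head e = a → ξ (tail e) = ξ a)) := by
        intro e
        have hN : (0:ℤ) < (n e : ℤ) := by exact_mod_cast hn e
        set m : ℤ := ((w.mu e).val : ℤ) with hm
        set N : ℤ := ((n e : ℕ) : ℤ) with hNdef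
        set dx : ℤ := x (tail e) - x (head e) with hdx
        set dy : ℤ := y (tail e) - y (head e) with hdy
        have hD : dx - dy = ξ (tail e) - ξ (head e) := by rw [hdx, hdy, hξ]; ring
        unfold edgeC
        by_cases h1 : tail e = a
        · rw [if_pos h1, if_pos h1]
          have hDnn : 0 ≤ dx - dy := by
            rw [hD, h1, ha]
            have := hmax (head e) (Finset.mem_univ _)
            omega
          have hdd : N ∣ dx - dy := by rw [hD]; exact hdvd e
          set q : ℤ := (dx - dy) / N with hq
          have hqe : q * N = dx - dy := Int.ediv_mul_cancel hdd
          have hq0 : 0 ≤ q := Int.ediv_nonneg hDnn hN.le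
          have k1 : (m + dx - 1) / N = (m + dy - 1) / N + q := by
            rw [show m + dx - 1 = (m + dy - 1) + q * N by linarith]
            exact ediv_shift _ hN.ne' q
          constructor
          · linarith
          · intro h0
            have hq00 : q = 0 := by linarith
            have hD0 : dx - dy = 0 := by rw [hq00, zero_mul] at hqe; omega
            have : ξ (head e) = ξ (tail e) := by omega
            constructor
            · intro _; rw [this, h1]
            · intro h2; rw [← h2] at ha ⊢; omega
        · by_cases h2 : head e = a
          · rw [if_neg h1, if_neg h1, if_pos h2, if_pos h2]
            have hDnp : dx - dy ≤ 0 := by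
              rw [hD, h2, ha]
              have := hmax (tail e) (Finset.mem_univ _)
              omega
            have hdd : N ∣ dx - dy := by rw [hD]; exact hdvd e
            set q : ℤ := (dx - dy) / N with hq
            have hqe : q * N = dx - dy := Int.ediv_mul_cancel hdd
            have hq0 : q ≤ 0 := by
              have h01 := Int.ediv_le_ediv hN hDnp
              rw [Int.zero_ediv] at h01
              exact h01
            have k1 : (m + dx) / N = (m + dy) / N + q := by
              rw [show m + dx = (m + dy) + q * N by linarith]
              exact ediv_shift _ hN.ne' q
            constructor
            · linarith
            · intro h0
              have hq00 : q = 0 := by linarith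
              have hD0 : dx - dy = 0 := by rw [hq00, zero_mul] at hqe; omega
              have : ξ (tail e) = ξ (head e) := by omega
              exact ⟨fun h1' => absurd h1' h1, fun _ => by rw [this, h2]⟩
          · rw [if_neg h1, if_neg h1, if_neg h2, if_neg h2]
            exact ⟨by simp, fun _ => ⟨fun h1' => absurd h1' h1, fun h2' => absurd h2' h2⟩⟩
      have hzero := (Finset.sum_eq_zero_iff_of_nonpos
        (fun e _ => (hterm e).1)).mp hsum
      obtain ⟨e₀, he₀⟩ := hab
      rcases he₀ with ⟨ht, hh⟩ | ⟨ht, hh⟩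
      · rw [← hh]
        exact (((hterm e₀).2 (hzero e₀ (Finset.mem_univ _))).1 ht).trans ha
      · rw [← ht]
        exact (((hterm e₀).2 (hzero e₀ (Finset.mem_univ _))).2 hh).trans ha
    refine ⟨ξ vm, fun u => ?_⟩
    have hwalk := hconn vm u
    have : ξ u = ξ vm := by
      induction hwalk with
      | refl => rfl
      | tail hab rel ih => exact hstep _ _ ih rel
    have h2 : x u - y u = ξ vm := this
    omega

theorem Phi_wV_mono (hn : ∀ e, 0 < n e) (w : AdmMD V E n) (x y : V → ℤ) (u : V)
    (h1 : ∀ e, tail e = u → y u - y (head e) ≤ x u - x (head e))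
    (h2 : ∀ e, head e = u → x (tail e) - x u ≤ y (tail e) - y u) :
    (Phi tail head n w x).wV u ≤ (Phi tail head n w y).wV u := by
  rw [Phi_wV_eq, Phi_wV_eq]
  apply add_le_add le_rfl
  apply Finset.sum_le_sum
  intro e _
  have hN : (0:ℤ) < (n e : ℤ) := by exact_mod_cast hn e
  unfold edgeC
  by_cases ha : tail e = u
  · rw [if_pos ha, if_pos ha]
    have hxy : y (tail e) - y (head e) ≤ x (tail e) - x (head e) := by
      rw [ha]; exact h1 e ha
    have := Int.ediv_le_ediv hN
      (show ((w.mu e).val : ℤ) + (y (tail e) - y (head e)) - 1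
          ≤ ((w.mu e).val : ℤ) + (x (tail e) - x (head e)) - 1 by linarith)
    linarith
  · by_cases hb : head e = u
    · rw [if_neg ha, if_neg ha, if_pos hb, if_pos hb]
      have hxy : x (tail e) - x (head e) ≤ y (tail e) - y (head e) := by
        rw [hb]; exact h2 e hb
      have := Int.ediv_le_ediv hN
        (show ((w.mu e).val : ℤ) + (x (tail e) - x (head e))
            ≤ ((w.mu e).val : ℤ) + (y (tail e) - y (head e)) by linarith)
      linarith
    · rw [if_neg ha, if_neg ha, if_neg hb, if_neg hb]

theorem sum_count_eq_length (l : List V) : ∑ u : V, (l.count u : ℤ) = l.length := by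
  induction l with
  | nil => simp
  | cons a l ih =>
    have hc : ∀ u : V, ((a :: l).count u : ℤ) = (l.count u : ℤ) + if u = a then 1 else 0 := by
      intro u
      rw [List.count_cons]
      push_cast
      by_cases h : u = a
      · simp [h]
      · simp [h, Ne.symm h]
    rw [Finset.sum_congr rfl (fun u _ => hc u), Finset.sum_add_distrib, ih,
      Finset.sum_ite_eq' Finset.univ a (fun _ => (1:ℤ))]
    simp

theorem exists_list_count (z : V → ℤ) (hz : ∀ u, 0 ≤ z u) :
    ∃ l : List V, ∀ u, (l.count u : ℤ) = z u := by
  refine ⟨(Finset.univ.toList).flatMap (fun u => List.replicate (z u).toNat u), fun u => ?_⟩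
  rw [List.count_flatMap]
  simp only [Function.comp_def]
  have hmap : (Finset.univ.toList.map
        (fun b => ((List.replicate (z b).toNat b).count u))).sum
      = ∑ b : V, if b = u then (z b).toNat else 0 := by
    rw [show (fun b : V => ((List.replicate (z b).toNat b).count u))
        = fun b => if b = u then (z b).toNat else 0 from funext fun b => by
      rw [List.count_replicate]
      by_cases h : b = u
      · simp [h]
      · simp [h]]
    rw [Finset.sum_map_toList]
  rw [hmap, Finset.sum_ite_eq' Finset.univ u (fun b => (z b).toNat)]
  simp [Int.toNat_of_nonneg (hz u)]

theorem Phi_inv (hn : ∀ e, 0 < n e) {w w' : AdmMD V E n} {z : V → ℤ}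
    (h : Phi tail head n w z = w') : Phi tail head n w' (fun t => -(z t)) = w := by
  rw [← h, Phi_add tail head n hn,
    show (fun t => z t + -(z t)) = fun _ : V => (0:ℤ) from funext fun t => by ring,
    Phi_zero]

theorem exists_norm_script (hloop : Loopless tail head) (hn : ∀ e, 0 < n e)
    [Nonempty V] {w₀ w w' : AdmMD V E n}
    (h : TwistSeq tail head n w₀ w) (h' : TwistSeq tail head n w₀ w') :
    ∃ z : V → ℤ, Phi tail head n w z = w' ∧ (∀ u, 0 ≤ z u) ∧ ∃ u₀, z u₀ = 0 := by
  obtain ⟨lw, hlw⟩ := h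
  obtain ⟨lv, hlv⟩ := h'
  have hPw : Phi tail head n w₀ (fun t => ((lw.count t : ℕ) : ℤ)) = w := by
    rw [← foldl_twist tail head n hloop hn, hlw]
  have hPv : Phi tail head n w₀ (fun t => ((lv.count t : ℕ) : ℤ)) = w' := by
    rw [← foldl_twist tail head n hloop hn, hlv]
  have hscr : Phi tail head n w (fun t => (lv.count t : ℤ) - (lw.count t : ℤ)) = w' := by
    rw [← hPw, Phi_add tail head n hn,
      show (fun t => ((lw.count t : ℕ) : ℤ) + ((lv.count t : ℤ) - (lw.count t : ℤ)))
        = fun t => ((lv.count t : ℕ) : ℤ) from funext fun t => by push_cast; ring]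
    exact hPv
  set ζ : V → ℤ := fun t => (lv.count t : ℤ) - (lw.count t : ℤ) with hζ
  obtain ⟨u₀, _, hmin⟩ := Finset.exists_min_image Finset.univ ζ
    ⟨Classical.arbitrary V, Finset.mem_univ _⟩
  refine ⟨fun t => ζ t - ζ u₀, ?_, ?_, ⟨u₀, sub_self _⟩⟩
  · rw [Phi_congr tail head n w _ ζ (fun e => by ring)]
    exact hscr
  · intro u
    show 0 ≤ ζ u - ζ u₀
    have := hmin u (Finset.mem_univ u)
    omega

theorem minpath_spec (hloop : Loopless tail head) (hconn : MGConnected tail head)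
    (hn : ∀ e, 0 < n e) {w w' : AdmMD V E n} {z : V → ℤ}
    (hz : Phi tail head n w z = w') (hz0 : ∀ u, 0 ≤ z u) (u₀ : V) (hz00 : z u₀ = 0) :
    (∃ l, IsMinPath tail head n w w' l) ∧
    (∀ l, IsMinPath tail head n w w' l → ∀ u, ((l.count u : ℕ) : ℤ) = z u) := by
  obtain ⟨lz, hlz⟩ := exists_list_count z hz0
  have hfold : lz.foldl (twist tail head n) w = w' := by
    rw [foldl_twist tail head n hloop hn,
      show (fun t => ((lz.count t : ℕ) : ℤ)) = z from funext hlz, hz]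
  have hlenz : (lz.length : ℤ) = ∑ u : V, z u := by
    rw [← sum_count_eq_length]
    exact Finset.sum_congr rfl (fun u _ => (hlz u))
  have hcard : 0 < (Fintype.card V : ℤ) := by
    have : 0 < Fintype.card V := Fintype.card_pos_iff.mpr ⟨u₀⟩
    exact_mod_cast this
  have hkey : ∀ l' : List V, l'.foldl (twist tail head n) w = w' →
      ∃ c : ℤ, 0 ≤ c ∧ (∀ u, ((l'.count u : ℕ) : ℤ) = z u + c) ∧
        ((l'.length : ℤ) = (lz.length : ℤ) + c * (Fintype.card V : ℤ)) := by
    intro l' hl'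
    rw [foldl_twist tail head n hloop hn] at hl'
    obtain ⟨c, hc⟩ := Phi_kernel tail head n hconn hn w _ z (hl'.trans hz.symm)
    have hc0 : 0 ≤ c := by
      have h1 := hc u₀
      have h2 : (0:ℤ) ≤ ((l'.count u₀ : ℕ) : ℤ) := by positivity
      omega
    refine ⟨c, hc0, hc, ?_⟩
    calc (l'.length : ℤ) = ∑ u : V, ((l'.count u : ℕ) : ℤ) :=
          (sum_count_eq_length _).symm
      _ = ∑ u : V, (z u + c) := Finset.sum_congr rfl (fun u _ => hc u)
      _ = (∑ u : V, z u) + c * (Fintype.card V : ℤ) := by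
          rw [Finset.sum_add_distrib, Finset.sum_const, Finset.card_univ]
          push_cast
          ring
      _ = (lz.length : ℤ) + c * (Fintype.card V : ℤ) := by rw [hlenz]
  constructor
  · refine ⟨lz, hfold, ?_⟩
    intro l' hl'
    obtain ⟨c, hc0, _, hlen⟩ := hkey l' hl'
    have hmul : 0 ≤ c * (Fintype.card V : ℤ) := mul_nonneg hc0 hcard.le
    have : (lz.length : ℤ) ≤ (l'.length : ℤ) := by linarith
    exact_mod_cast this
  · intro l hl u
    obtain ⟨c, hc0, hc, hlen⟩ := hkey l hl.1
    have hle : l.length ≤ lz.length := hl.2 lz hfold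
    have hle' : (l.length : ℤ) ≤ (lz.length : ℤ) := by exact_mod_cast hle
    have hmul : c * (Fintype.card V : ℤ) ≤ 0 := by linarith
    have hz' : c * (Fintype.card V : ℤ) = 0 :=
      le_antisymm hmul (mul_nonneg hc0 hcard.le)
    have hc00 : c = 0 := (mul_eq_zero.mp hz').resolve_right (by exact_mod_cast hcard.ne')
    rw [hc u, hc00, add_zero]

end Aux
/-- `Ḡ(w₀)` is finite; any everywhere-nonnegative `w ∈ V(G(w₀))` lies in
`Ḡ(w₀)`, so `Ḡ(w₀)` is nonempty when such `w` exists. -/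
theorem statement_9 {V E : Type*} [Fintype V] [Fintype E] [DecidableEq V] [DecidableEq E]
    (tail head : E → V) (n : E → ℕ)
    (hloop : Loopless tail head) (hconn : MGConnected tail head)
    (hn : ∀ e, 0 < n e)
    (w₀ : AdmMD V E n) (wv : V → AdmMD V E n)
    (hwv : ∀ v : V, TwistSeq tail head n w₀ (wv v) ∧ Concentrated tail head n (wv v) v) :
    {w : AdmMD V E n | InBarG tail head n w₀ wv w}.Finite ∧
    (∀ w : AdmMD V E n, TwistSeq tail head n w₀ w → (∀ v : V, 0 ≤ w.wV v) →
      InBarG tail head n w₀ wv w) ∧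
    ((∃ w : AdmMD V E n, TwistSeq tail head n w₀ w ∧ ∀ v : V, 0 ≤ w.wV v) →
      ∃ w : AdmMD V E n, InBarG tail head n w₀ wv w) := by
  classical
  have key : ∀ w : AdmMD V E n, TwistSeq tail head n w₀ w → (∀ v : V, 0 ≤ w.wV v) →
      InBarG tail head n w₀ wv w := by
    intro w hw heff
    refine ⟨hw, fun v l hl => ?_⟩
    haveI : Nonempty V := ⟨v⟩
    obtain ⟨z, hz, hz0, u₀, hz00⟩ :=
      exists_norm_script tail head n hloop hn hw (hwv v).1
    have hspec := minpath_spec tail head n hloop hconn hn hz hz0 u₀ hz00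
    have hcnt := hspec.2 l hl v
    intro hvl
    have hzv : 0 < z v := by
      have h1 : 0 < l.count v := List.count_pos_iff.mpr hvl
      omega
    obtain ⟨L, hnd, hcompl, hhead, hneg⟩ := (hwv v).2
    have hex : ∃ i : ℕ, ∃ h : i < L.length, z (L.get ⟨i, h⟩) = 0 := by
      obtain ⟨j, hj, hjv⟩ := List.mem_iff_getElem.mp (hcompl u₀)
      refine ⟨j, hj, ?_⟩
      rw [show L.get ⟨j, hj⟩ = L[j] from rfl, hjv]
      exact hz00
    obtain ⟨hi, hzi⟩ := Nat.find_spec hex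
    set i := Nat.find hex with hidef
    have hi0 : 0 < i := by
      rcases Nat.eq_zero_or_pos i with h0 | h0
      · exfalso
        have hv0 : L.get ⟨i, hi⟩ = v := by
          have hfin : (⟨i, hi⟩ : Fin L.length) = ⟨0, by omega⟩ := Fin.ext h0
          rw [hfin]
          cases L with
          | nil => simp at hhead
          | cons a L' =>
            have ha : a = v := by simpa using hhead
            simpa using ha
        rw [hv0] at hzi
        omega
      · exact h0
    have hileast : ∀ j (hj : j < L.length), j < i → 0 < z (L.get ⟨j, hj⟩) := by
      intro j hj hji
      have hnm := Nat.find_min hex hji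
      have h1 : ¬ (z (L.get ⟨j, hj⟩) = 0) := fun hc => hnm ⟨hj, hc⟩
      have h2 := hz0 (L.get ⟨j, hj⟩)
      omega
    have hprend : (L.take i).Nodup := hnd.sublist (List.take_sublist _ _)
    have hcnt_le : ∀ t : V, (((L.take i).count t : ℕ) : ℤ) ≤ z t := by
      intro t
      by_cases hmem : t ∈ L.take i
      · have h1 : (L.take i).count t = 1 := List.count_eq_one_of_mem hprend hmem
        obtain ⟨j, hj, hjt⟩ := List.mem_iff_getElem.mp hmem
        have hji : j < i := by rw [List.length_take] at hj; omega
        have hjlen : j < L.length := by rw [List.length_take] at hj; omega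
        have hLj : L.get ⟨j, hjlen⟩ = t := by
          rw [show L.get ⟨j, hjlen⟩ = L[j] from rfl, ← List.getElem_take (xs := L) (h := hj)]
          exact hjt
        have h2 := hileast j hjlen hji
        rw [hLj] at h2
        rw [h1]
        omega
      · rw [List.count_eq_zero_of_not_mem hmem]
        simpa using hz0 t
    have hui_not : L.get ⟨i, hi⟩ ∉ L.take i := by
      intro hmem
      obtain ⟨j, hj, hjt⟩ := List.mem_iff_getElem.mp hmem
      have hji : j < i := by rw [List.length_take] at hj; omega
      have hjlen : j < L.length := by rw [List.length_take] at hj; omega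
      have hLj : L[j] = L[i] := by
        rw [← List.getElem_take (xs := L) (h := hj)] at *
        exact hjt
      have := (hnd.getElem_inj_iff).mp hLj
      omega
    have hcnt_ui : (L.take i).count (L.get ⟨i, hi⟩) = 0 :=
      List.count_eq_zero_of_not_mem hui_not
    have hw' : Phi tail head n (wv v) (fun t => -(z t)) = w := Phi_inv tail head n hn hz
    have hfoldpre := foldl_negTwist tail head n hloop hn (wv v) (L.take i)
    have hconc := hneg i hi hi0
    have hmono : w.wV (L.get ⟨i, hi⟩)
        ≤ ((L.take i).foldl (negTwist tail head n) (wv v)).wV (L.get ⟨i, hi⟩) := by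
      rw [hfoldpre, ← hw']
      apply Phi_wV_mono tail head n hn
      · intro e hte
        show -(((L.take i).count (L.get ⟨i, hi⟩) : ℕ) : ℤ)
            - -(((L.take i).count (head e) : ℕ) : ℤ)
          ≤ -(z (L.get ⟨i, hi⟩)) - -(z (head e))
        have h1 := hcnt_le (head e)
        have h2 : z (L.get ⟨i, hi⟩) = 0 := hzi
        rw [hcnt_ui, h2]
        push_cast
        omega
      · intro e hte
        show -(z (tail e)) - -(z (L.get ⟨i, hi⟩))
          ≤ -(((L.take i).count (tail e) : ℕ) : ℤ)
            - -(((L.take i).count (L.get ⟨i, hi⟩) : ℕ) : ℤ)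
        have h1 := hcnt_le (tail e)
        have h2 : z (L.get ⟨i, hi⟩) = 0 := hzi
        rw [hcnt_ui, h2]
        push_cast
        omega
    have := heff (L.get ⟨i, hi⟩)
    linarith
  have hfin : {w : AdmMD V E n | InBarG tail head n w₀ wv w}.Finite := by
    cases isEmpty_or_nonempty V with
    | inl hV =>
      apply Set.Subsingleton.finite
      intro a _ b _
      exact AdmMD.ext' (fun v => isEmptyElim v) (fun e => isEmptyElim (tail e))
    | inr hV =>
      set v₀ : V := Classical.arbitrary V with hv₀
      have hδ : ∀ u : V, ∃ δu : V → ℤ, Phi tail head n (wv v₀) δu = wv u := by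
        intro u
        obtain ⟨z, hz, _, _⟩ :=
          exists_norm_script tail head n hloop hn (hwv v₀).1 (hwv u).1
        exact ⟨z, hz⟩
      choose δ hδspec using hδ
      apply Set.Finite.subset (Set.Finite.image
        (fun z : V → ℤ => Phi tail head n (wv v₀) (fun t => -(z t)))
        (Set.Finite.pi (fun u : V => Set.finite_Icc (0:ℤ) (δ u v₀ - δ u u))))
      intro w hw
      obtain ⟨hws, hbar⟩ := hw
      have hzuex : ∀ u : V, ∃ zu : V → ℤ, Phi tail head n w zu = wv u ∧
          (∀ t, 0 ≤ zu t) ∧ zu u = 0 := by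
        intro u
        obtain ⟨zu, hz, hz0, u₀, hz00⟩ :=
          exists_norm_script tail head n hloop hn hws (hwv u).1
        refine ⟨zu, hz, hz0, ?_⟩
        obtain ⟨⟨l, hlmin⟩, hcnt⟩ := minpath_spec tail head n hloop hconn hn hz hz0 u₀ hz00
        have hnotin := hbar u l hlmin
        have h1 := hcnt l hlmin u
        rw [List.count_eq_zero_of_not_mem hnotin] at h1
        simpa using h1.symm
      choose zu hzu1 hzu2 hzu3 using hzuex
      refine ⟨zu v₀, ?_, Phi_inv tail head n hn (hzu1 v₀)⟩
      rw [Set.mem_pi]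
      intro u _
      rw [Set.mem_Icc]
      refine ⟨hzu2 v₀ u, ?_⟩
      have hcomp : Phi tail head n w (fun t => zu v₀ t + δ u t) = wv u := by
        rw [← Phi_add tail head n hn, hzu1 v₀, hδspec u]
      obtain ⟨c, hc⟩ := Phi_kernel tail head n hconn hn w _ _ ((hzu1 u).trans hcomp.symm)
      have h1 : zu u u = zu v₀ u + δ u u + c := by
        have := hc u; simpa using this
      have h2 : zu u v₀ = zu v₀ v₀ + δ u v₀ + c := by
        have := hc v₀; simpa using this
      have h3 := hzu3 u
      have h4 := hzu3 v₀
      have h5 := hzu2 u v₀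
      omega
  refine ⟨hfin, key, ?_⟩
  rintro ⟨w, hw, heff⟩
  exact ⟨w, key w hw heff⟩

end LLS
end

section
/- Let w and w' be admissible multidegrees on (Γ, 𝐧) such that w' is obtained from w by a finite sequence of twists at vertices all different from a fixed vertex v ∈ V(Γ). Then w'_Γ(v) ≥ w_Γ(v). Consequently, if w₀ is an admissible multidegree, w_v ∈ V(G(w₀)) is concentrated at v for each v ∈ V(Γ), and w ∈ V(Ḡ(w₀)), then w_Γ(v) ≤ (w_v)_Γ(v) for every v ∈ V(Γ). -/
open scoped Classical

namespace LLS

variable {V E : Type*}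

section Proof10

variable [Fintype V] [Fintype E] [DecidableEq V] [DecidableEq E]
variable (tail head : E → V) (n : E → ℕ)

lemma admMD_ext {a b : AdmMD V E n} (h1 : a.wV = b.wV) (h2 : a.mu = b.mu) : a = b := by
  cases a; cases b; cases h1; cases h2; rfl

lemma twist_wV (w : AdmMD V E n) (v u : V) :
    (twist tail head n w v).wV u = w.wV u
      - (if u = v then ((Finset.univ.filter fun e : E =>
          sigma tail head e v ≠ 0 ∧ w.mu e = 0).card : ℤ) else 0)
      + ((Finset.univ.filter fun e : E => sigma tail head e v ≠ 0 ∧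
          w.mu e + (sigma tail head e v : ZMod (n e)) = 0 ∧
          otherEnd tail head e v = u).card : ℤ) := rfl

lemma twist_mu (w : AdmMD V E n) (v : V) (e : E) :
    (twist tail head n w v).mu e = w.mu e + (sigma tail head e v : ZMod (n e)) := rfl

lemma card_filter_int (p : E → Prop) [DecidablePred p] :
    ((Finset.univ.filter p).card : ℤ) = ∑ e : E, if p e then (1:ℤ) else 0 := by
  rw [Finset.card_filter, Nat.cast_sum]
  exact Finset.sum_congr rfl fun e _ => by split_ifs <;> simp

lemma wV_le_foldl (w : AdmMD V E n) (l : List V) (v : V) (hv : v ∉ l) :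
    w.wV v ≤ (l.foldl (twist tail head n) w).wV v := by
  induction l generalizing w with
  | nil => exact le_refl _
  | cons x l ih =>
      simp only [List.mem_cons, not_or] at hv
      rw [List.foldl_cons]
      refine le_trans ?_ (ih (twist tail head n w x) hv.2)
      rw [twist_wV tail head n w x v, if_neg hv.1]
      have := Int.natCast_nonneg ((Finset.univ.filter fun e : E =>
        sigma tail head e x ≠ 0 ∧
          w.mu e + (sigma tail head e x : ZMod (n e)) = 0 ∧
          otherEnd tail head e x = v).card)
      linarith

lemma sum_sigma_eq_zero (hloop : Loopless tail head) (e : E) :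
    ∑ x : V, sigma tail head e x = 0 := by
  have h : ∀ x : V, sigma tail head e x
      = (if tail e = x then (1:ℤ) else 0) + (if head e = x then (-1:ℤ) else 0) := by
    intro x
    unfold sigma
    by_cases h1 : tail e = x
    · have h2 : head e ≠ x := fun hh => hloop e (h1.trans hh.symm)
      rw [if_pos h1, if_pos h1, if_neg h2]
      ring
    · by_cases h2 : head e = x
      · rw [if_neg h1, if_pos h2, if_neg h1, if_pos h2]
        ring
      · rw [if_neg h1, if_neg h2, if_neg h1, if_neg h2]
        ring
  simp only [h, Finset.sum_add_distrib, Finset.sum_ite_eq, Finset.mem_univ, if_true]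
  ring

lemma otherEnd_ne (hloop : Loopless tail head) (e : E) (v : V)
    (h : sigma tail head e v ≠ 0) : otherEnd tail head e v ≠ v := by
  unfold otherEnd
  by_cases h1 : tail e = v
  · simp only [h1, if_true]
    exact fun hh => hloop e (h1.trans hh.symm)
  · simp only [h1, if_false]
    exact h1

lemma adj_other (hloop : Loopless tail head) (e : E) (y : V)
    (h : sigma tail head e y ≠ 0) :
    sigma tail head e (otherEnd tail head e y) = - sigma tail head e y ∧
    otherEnd tail head e (otherEnd tail head e y) = y ∧
    sigma tail head e (otherEnd tail head e y) ≠ 0 := by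
  unfold sigma otherEnd at *
  by_cases h1 : tail e = y
  · have h2 : head e ≠ y := fun hh => hloop e (h1.trans hh.symm)
    have h3 : tail e ≠ head e := hloop e
    simp [h1, h2, h3, Ne.symm h2, Ne.symm h3]
  · have h2 : head e = y := by
      by_contra h2
      simp [h1, h2] at h
    simp [h1, h2, Ne.symm h1]

lemma sigma_zero_of_far (hloop : Loopless tail head) (e : E) {u y : V}
    (hσ : sigma tail head e u ≠ 0) (h1 : u ≠ y) (h2 : otherEnd tail head e u ≠ y) :
    sigma tail head e y = 0 := by
  unfold sigma otherEnd at *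
  by_cases ht : tail e = u
  · have hh : head e ≠ y := by simpa [ht] using h2
    have ht' : tail e ≠ y := fun hc => h1 (ht.symm.trans hc)
    simp [ht', hh]
  · have hh : head e = u := by
      by_contra hh
      simp [ht, hh] at hσ
    have ht2 : tail e ≠ y := by simpa [ht] using h2
    have hh' : head e ≠ y := fun hc => h1 (hh.symm.trans hc)
    simp [ht2, hh']

/-- Key invariant: folding twists over a duplicate-free list `l` changes `mu` by the sum
of sigmas over `l`, and changes `wV u` by an explicitly described correction term. -/
lemma cycle_inv (hloop : Loopless tail head) (w : AdmMD V E n) (l : List V)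
    (hnd : l.Nodup) :
    (∀ e, (l.foldl (twist tail head n) w).mu e
        = w.mu e + ((∑ x ∈ l.toFinset, sigma tail head e x : ℤ) : ZMod (n e))) ∧
    (∀ u, (l.foldl (twist tail head n) w).wV u
        = w.wV u + (if u ∈ l.toFinset then
            -((Finset.univ.filter fun e : E => sigma tail head e u ≠ 0 ∧
                otherEnd tail head e u ∉ l.toFinset ∧
                (l.foldl (twist tail head n) w).mu e
                  = (sigma tail head e u : ZMod (n e))).card : ℤ)
          else
            ((Finset.univ.filter fun e : E => sigma tail head e u ≠ 0 ∧
                otherEnd tail head e u ∈ l.toFinset ∧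
                (l.foldl (twist tail head n) w).mu e = 0).card : ℤ))) := by
  induction l using List.reverseRecOn with
  | nil =>
      constructor
      · intro e; simp
      · intro u; simp
  | append_singleton l y ihfull =>
      have hnd' : l.Nodup := (List.nodup_append'.mp hnd).1
      have hyl : y ∉ l := by
        intro hy
        have := List.nodup_append'.mp hnd
        exact this.2.2 hy (List.mem_singleton_self y)
      obtain ⟨ih1, ih2⟩ := ihfull hnd'
      set w' := l.foldl (twist tail head n) w with hw'
      have hfold : (l ++ [y]).foldl (twist tail head n) w = twist tail head n w' y := by
        rw [List.foldl_append, List.foldl_cons, List.foldl_nil]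
      have hT : (l ++ [y]).toFinset = insert y l.toFinset := by
        ext x; simp [or_comm]
      have hyS : y ∉ l.toFinset := by simpa using hyl
      constructor
      · intro e
        rw [hfold, twist_mu, ih1 e, hT, Finset.sum_insert hyS]
        push_cast
        ring
      · intro u
        rw [hfold, twist_wV, ih2 u, hT]
        simp only [twist_mu]
        by_cases huy : u = y
        · subst huy
          rw [if_neg hyS, if_pos (Finset.mem_insert_self u _), if_pos rfl]
          have key : ∀ e : E,
              (if (sigma tail head e u ≠ 0 ∧ otherEnd tail head e u ∈ l.toFinset ∧
                  w'.mu e = 0) then (1:ℤ) else 0)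
              - (if (sigma tail head e u ≠ 0 ∧ w'.mu e = 0) then (1:ℤ) else 0)
              + (if (sigma tail head e u ≠ 0 ∧
                  w'.mu e + (sigma tail head e u : ZMod (n e)) = 0 ∧
                  otherEnd tail head e u = u) then (1:ℤ) else 0)
              = -(if (sigma tail head e u ≠ 0 ∧
                  otherEnd tail head e u ∉ insert u l.toFinset ∧
                  w'.mu e + (sigma tail head e u : ZMod (n e))
                    = (sigma tail head e u : ZMod (n e))) then (1:ℤ) else 0) := by
            intro e
            by_cases hs : sigma tail head e u = 0
            · simp [hs]
            · have hne : otherEnd tail head e u ≠ u := otherEnd_ne tail head hloop e u hs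
              simp only [hs, ne_eq, not_false_eq_true, true_and, hne, and_false, if_false,
                Finset.mem_insert, not_or, add_eq_right]
              by_cases hm : w'.mu e = 0
              · by_cases ho : otherEnd tail head e u ∈ l.toFinset <;>
                  simp [hm, ho, hne]
              · simp [hm]
          have hsum :
              ((Finset.univ.filter fun e : E => sigma tail head e u ≠ 0 ∧
                  otherEnd tail head e u ∈ l.toFinset ∧ w'.mu e = 0).card : ℤ)
              - ((Finset.univ.filter fun e : E =>
                  sigma tail head e u ≠ 0 ∧ w'.mu e = 0).card : ℤ)
              + ((Finset.univ.filter fun e : E => sigma tail head e u ≠ 0 ∧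
                  w'.mu e + (sigma tail head e u : ZMod (n e)) = 0 ∧
                  otherEnd tail head e u = u).card : ℤ)
              = -((Finset.univ.filter fun e : E => sigma tail head e u ≠ 0 ∧
                  otherEnd tail head e u ∉ insert u l.toFinset ∧
                  w'.mu e + (sigma tail head e u : ZMod (n e))
                    = (sigma tail head e u : ZMod (n e))).card : ℤ) := by
            rw [card_filter_int, card_filter_int, card_filter_int, card_filter_int,
              ← Finset.sum_sub_distrib, ← Finset.sum_add_distrib, ← Finset.sum_neg_distrib]
            exact Finset.sum_congr rfl fun e _ => key e
          rw [add_sub_assoc, add_assoc]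
          exact congrArg (w.wV u + ·) hsum
        · rw [if_neg huy, sub_zero]
          have hmemiff : u ∈ insert y l.toFinset ↔ u ∈ l.toFinset := by
            simp [Finset.mem_insert, huy]
          by_cases huS : u ∈ l.toFinset
          · rw [if_pos huS, if_pos (hmemiff.mpr huS)]
            have key : ∀ e : E,
                -(if (sigma tail head e u ≠ 0 ∧ otherEnd tail head e u ∉ l.toFinset ∧
                    w'.mu e = (sigma tail head e u : ZMod (n e))) then (1:ℤ) else 0)
                + (if (sigma tail head e y ≠ 0 ∧
                    w'.mu e + (sigma tail head e y : ZMod (n e)) = 0 ∧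
                    otherEnd tail head e y = u) then (1:ℤ) else 0)
                = -(if (sigma tail head e u ≠ 0 ∧
                    otherEnd tail head e u ∉ insert y l.toFinset ∧
                    w'.mu e + (sigma tail head e y : ZMod (n e))
                      = (sigma tail head e u : ZMod (n e))) then (1:ℤ) else 0) := by
              intro e
              by_cases hs : sigma tail head e u = 0
              · have hb : ¬ (sigma tail head e y ≠ 0 ∧
                    w'.mu e + (sigma tail head e y : ZMod (n e)) = 0 ∧
                    otherEnd tail head e y = u) := by
                  rintro ⟨hsy, -, hoy⟩
                  obtain ⟨-, -, h3⟩ := adj_other tail head hloop e y hsy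
                  rw [hoy] at h3
                  exact h3 hs
                simp [hs, hb]
              · by_cases hoy : otherEnd tail head e u = y
                · have hou : otherEnd tail head e y = u := by
                    obtain ⟨-, h2, -⟩ := adj_other tail head hloop e u hs
                    rw [hoy] at h2; exact h2
                  have hsy : sigma tail head e y = - sigma tail head e u := by
                    obtain ⟨h1, -, -⟩ := adj_other tail head hloop e u hs
                    rw [hoy] at h1; exact h1
                  have hsyne : sigma tail head e y ≠ 0 := by
                    rw [hsy]; simpa using hs
                  have hnotmem : otherEnd tail head e u ∉ l.toFinset := by
                    rw [hoy]; exact hyS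
                  have hnotmem' : ¬ otherEnd tail head e u ∉ insert y l.toFinset := by
                    rw [hoy]; simp
                  have hcond : (w'.mu e + (sigma tail head e y : ZMod (n e)) = 0)
                      ↔ w'.mu e = (sigma tail head e u : ZMod (n e)) := by
                    rw [hsy]; push_cast
                    exact add_neg_eq_zero
                  simp only [hs, hsyne, ne_eq, not_false_eq_true, true_and, hnotmem,
                    hnotmem', false_and, and_false, if_false, hou, and_true, hcond,
                    not_true_eq_false]
                  by_cases hm : w'.mu e = (sigma tail head e u : ZMod (n e)) <;>
                    simp [hm]
                · have hsy : sigma tail head e y = 0 :=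
                    sigma_zero_of_far tail head hloop e hs huy hoy
                  have hmem : otherEnd tail head e u ∉ insert y l.toFinset
                      ↔ otherEnd tail head e u ∉ l.toFinset := by
                    simp [Finset.mem_insert, hoy]
                  simp [hs, hsy, hmem, hoy]
            have hsum :
                -((Finset.univ.filter fun e : E => sigma tail head e u ≠ 0 ∧
                    otherEnd tail head e u ∉ l.toFinset ∧
                    w'.mu e = (sigma tail head e u : ZMod (n e))).card : ℤ)
                + ((Finset.univ.filter fun e : E => sigma tail head e y ≠ 0 ∧
                    w'.mu e + (sigma tail head e y : ZMod (n e)) = 0 ∧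
                    otherEnd tail head e y = u).card : ℤ)
                = -((Finset.univ.filter fun e : E => sigma tail head e u ≠ 0 ∧
                    otherEnd tail head e u ∉ insert y l.toFinset ∧
                    w'.mu e + (sigma tail head e y : ZMod (n e))
                      = (sigma tail head e u : ZMod (n e))).card : ℤ) := by
              rw [card_filter_int, card_filter_int, card_filter_int,
                ← Finset.sum_neg_distrib, ← Finset.sum_add_distrib,
                ← Finset.sum_neg_distrib]
              exact Finset.sum_congr rfl fun e _ => key e
            rw [add_assoc]
            exact congrArg (w.wV u + ·) hsum
          · rw [if_neg huS, if_neg (fun h => huS (hmemiff.mp h))]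
            have key : ∀ e : E,
                (if (sigma tail head e u ≠ 0 ∧ otherEnd tail head e u ∈ l.toFinset ∧
                    w'.mu e = 0) then (1:ℤ) else 0)
                + (if (sigma tail head e y ≠ 0 ∧
                    w'.mu e + (sigma tail head e y : ZMod (n e)) = 0 ∧
                    otherEnd tail head e y = u) then (1:ℤ) else 0)
                = (if (sigma tail head e u ≠ 0 ∧
                    otherEnd tail head e u ∈ insert y l.toFinset ∧
                    w'.mu e + (sigma tail head e y : ZMod (n e)) = 0)
                  then (1:ℤ) else 0) := by
              intro e
              by_cases hs : sigma tail head e u = 0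
              · have hb : ¬ (sigma tail head e y ≠ 0 ∧
                    w'.mu e + (sigma tail head e y : ZMod (n e)) = 0 ∧
                    otherEnd tail head e y = u) := by
                  rintro ⟨hsy, -, hoy⟩
                  obtain ⟨-, -, h3⟩ := adj_other tail head hloop e y hsy
                  rw [hoy] at h3
                  exact h3 hs
                simp [hs, hb]
              · by_cases hoy : otherEnd tail head e u = y
                · have hou : otherEnd tail head e y = u := by
                    obtain ⟨-, h2, -⟩ := adj_other tail head hloop e u hs
                    rw [hoy] at h2; exact h2
                  have hsy : sigma tail head e y = - sigma tail head e u := by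
                    obtain ⟨h1, -, -⟩ := adj_other tail head hloop e u hs
                    rw [hoy] at h1; exact h1
                  have hsyne : sigma tail head e y ≠ 0 := by
                    rw [hsy]; simpa using hs
                  have hnotmem : otherEnd tail head e u ∉ l.toFinset := by
                    rw [hoy]; exact hyS
                  have hmem' : otherEnd tail head e u ∈ insert y l.toFinset := by
                    rw [hoy]; simp
                  simp only [hs, hsyne, ne_eq, not_false_eq_true, true_and, hnotmem,
                    false_and, and_false, if_false, hou, and_true, hmem', true_and,
                    zero_add]
                · have hsy : sigma tail head e y = 0 :=
                    sigma_zero_of_far tail head hloop e hs huy hoy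
                  have hmem : otherEnd tail head e u ∈ insert y l.toFinset
                      ↔ otherEnd tail head e u ∈ l.toFinset := by
                    simp [Finset.mem_insert, hoy]
                  simp [hs, hsy, hmem, hoy]
            have hsum :
                ((Finset.univ.filter fun e : E => sigma tail head e u ≠ 0 ∧
                    otherEnd tail head e u ∈ l.toFinset ∧ w'.mu e = 0).card : ℤ)
                + ((Finset.univ.filter fun e : E => sigma tail head e y ≠ 0 ∧
                    w'.mu e + (sigma tail head e y : ZMod (n e)) = 0 ∧
                    otherEnd tail head e y = u).card : ℤ)
                = ((Finset.univ.filter fun e : E => sigma tail head e u ≠ 0 ∧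
                    otherEnd tail head e u ∈ insert y l.toFinset ∧
                    w'.mu e + (sigma tail head e y : ZMod (n e)) = 0).card : ℤ) := by
              rw [card_filter_int, card_filter_int, card_filter_int,
                ← Finset.sum_add_distrib]
              exact Finset.sum_congr rfl fun e _ => key e
            rw [add_assoc]
            exact congrArg (w.wV u + ·) hsum

lemma foldl_twist_univ (hloop : Loopless tail head) (w : AdmMD V E n) (l : List V)
    (hnd : l.Nodup) (hall : ∀ x, x ∈ l) :
    l.foldl (twist tail head n) w = w := by
  obtain ⟨h1, h2⟩ := cycle_inv tail head n hloop w l hnd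
  have hS : l.toFinset = Finset.univ := by
    ext x; simp [hall x]
  apply admMD_ext
  · funext u
    rw [h2 u, hS]
    simp
  · funext e
    rw [h1 e, hS, sum_sigma_eq_zero tail head hloop e]
    simp

lemma exists_inv_path (hloop : Loopless tail head) (w₀ w : AdmMD V E n)
    (h : TwistSeq tail head n w₀ w) :
    ∃ m : List V, m.foldl (twist tail head n) w = w₀ := by
  obtain ⟨l, hl⟩ := h
  induction l using List.reverseRecOn generalizing w with
  | nil => exact ⟨[], by simpa using hl.symm⟩
  | append_singleton l x ih =>
      rw [List.foldl_append, List.foldl_cons, List.foldl_nil] at hl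
      obtain ⟨m', hm'⟩ := ih (l.foldl (twist tail head n) w₀) rfl
      set p := l.foldl (twist tail head n) w₀ with hp
      have hnd : (x :: (Finset.univ.toList.erase x)).Nodup := by
        refine List.Nodup.cons ?_ (Finset.univ.nodup_toList.erase x)
        exact fun hmem => (List.Nodup.not_mem_erase Finset.univ.nodup_toList) hmem
      have hall : ∀ z : V, z ∈ (x :: (Finset.univ.toList.erase x)) := by
        intro z
        by_cases hz : z = x
        · simp [hz]
        · exact List.mem_cons_of_mem _
            (List.mem_erase_of_ne hz |>.mpr (Finset.mem_toList.mpr (Finset.mem_univ z)))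
      have hcyc := foldl_twist_univ tail head n hloop p _ hnd hall
      rw [List.foldl_cons] at hcyc
      refine ⟨(Finset.univ.toList.erase x) ++ m', ?_⟩
      rw [List.foldl_append, ← hl, hcyc, hm']

end Proof10

/-- twisting at vertices other than `v` does not decrease the degree at
`v`; consequently, for `w ∈ V(Ḡ(w₀))` the degree of `w` at each `v` is at most that of
`w_v` at `v`. -/
theorem statement_10 {V E : Type*} [Fintype V] [Fintype E] [DecidableEq V] [DecidableEq E]
    (tail head : E → V) (n : E → ℕ)
    (hloop : Loopless tail head) (hconn : MGConnected tail head)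
    (hn : ∀ e, 0 < n e)
    (w₀ : AdmMD V E n) (wv : V → AdmMD V E n)
    (hwv : ∀ v : V, TwistSeq tail head n w₀ (wv v) ∧ Concentrated tail head n (wv v) v) :
    (∀ (w w' : AdmMD V E n) (v : V) (l : List V), v ∉ l →
        l.foldl (twist tail head n) w = w' → w.wV v ≤ w'.wV v) ∧
    (∀ w : AdmMD V E n, InBarG tail head n w₀ wv w →
        ∀ v : V, w.wV v ≤ (wv v).wV v) := by
  constructor
  · intro w w' v l hv heq
    rw [← heq]
    exact wV_le_foldl tail head n w l v hv
  · rintro w ⟨hts, hmin⟩ v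
    -- there is a path from w back to w₀, hence to wv v
    obtain ⟨m1, hm1⟩ := exists_inv_path tail head n hloop w₀ w hts
    obtain ⟨l2, hl2⟩ := (hwv v).1
    have hpath : (m1 ++ l2).foldl (twist tail head n) w = wv v := by
      rw [List.foldl_append, hm1, hl2]
    -- choose a minimal-length path
    have hex : ∃ k : ℕ, ∃ l : List V, l.length = k ∧
        l.foldl (twist tail head n) w = wv v :=
      ⟨(m1 ++ l2).length, m1 ++ l2, rfl, hpath⟩
    classical
    obtain ⟨l, hlen, hfold⟩ := Nat.find_spec hex
    have hminpath : IsMinPath tail head n w (wv v) l := by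
      refine ⟨hfold, fun l' hl' => ?_⟩
      rw [hlen]
      exact Nat.find_min' hex ⟨l', rfl, hl'⟩
    have hvl : v ∉ l := hmin v l hminpath
    rw [← hfold]
    exact wV_le_foldl tail head n w l v hvl

end LLS
end

section
/- Suppose Γ is a multitree, and w = (w_Γ, μ) is an admissible multidegree on (Γ, 𝐧) which is concentrated at a vertex v ∈ V(Γ) and satisfies w_Γ(v') ≥ 0 for all v' ≠ v. Then for every subset U ⊆ V(Γ) containing v whose induced subgraph Γ|_U (with vertex set U and all edges of Γ having both endpoints in U) is connected, the restriction of w to (Γ|_U, 𝐧|_U) — obtained by restricting w_Γ to U and μ to the edges of Γ|_U — is an admissible multidegree concentrated at v. -/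
open scoped Classical

namespace LLS

variable {V E : Type*}

section Aux

lemma ends_of_sigma_otherEnd {tail head : E → V} {e : E} {x u : V}
    (h1 : sigma tail head e x ≠ 0) (h2 : otherEnd tail head e x = u) :
    (tail e = x ∧ head e = u) ∨ (head e = x ∧ tail e = u) := by
  unfold sigma otherEnd at *
  split_ifs at h1 h2 with h h'
  · exact Or.inl ⟨h, h2⟩
  · exact Or.inr ⟨h', h2⟩
  · simp at h1

lemma sigma_eq_zero {tail head : E → V} {e : E} {x : V} (ht : tail e ≠ x) (hh : head e ≠ x) :
    sigma tail head e x = 0 := by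
  unfold sigma; rw [if_neg ht, if_neg hh]

/-- The number of edges between `x` and `u` with `μ = 0`. -/
noncomputable def cnt [Fintype V] [Fintype E] [DecidableEq V] [DecidableEq E] (tail head : E → V) (n : E → ℕ) (w : AdmMD V E n)
    (x u : V) : ℕ :=
  (Finset.univ.filter fun e : E => sigma tail head e x ≠ 0 ∧ w.mu e = 0 ∧
    otherEnd tail head e x = u).card

lemma foldl_negTwist_wV [Fintype V] [Fintype E] [DecidableEq V] [DecidableEq E]
    (tail head : E → V) (n : E → ℕ) :
    ∀ (l : List V) (w : AdmMD V E n) (u : V), u ∉ l → l.Nodup →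
      (l.foldl (negTwist tail head n) w).wV u
        = w.wV u - ((l.map fun x => (cnt tail head n w x u : ℤ)).sum) := by
  intro l
  induction l with
  | nil => intro w u _ _; simp
  | cons x t ih =>
    intro w u hu hnd
    have hux : u ≠ x := fun h => hu (h ▸ List.mem_cons_self)
    have hut : u ∉ t := fun h => hu (List.mem_cons_of_mem x h)
    have hxt : x ∉ t := (List.nodup_cons.1 hnd).1
    rw [List.foldl_cons, ih (negTwist tail head n w x) u hut (List.nodup_cons.1 hnd).2]
    have h1 : (negTwist tail head n w x).wV u = w.wV u - (cnt tail head n w x u : ℤ) := by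
      simp only [negTwist, if_neg hux, cnt, add_zero]
    have h2 : ∀ y ∈ t, cnt tail head n (negTwist tail head n w x) y u
        = cnt tail head n w y u := by
      intro y hy
      have hxy : x ≠ y := fun h => hxt (h ▸ hy)
      unfold cnt
      congr 1
      apply Finset.filter_congr
      intro e _
      constructor <;> intro ⟨hs, hm, ho⟩ <;> refine ⟨hs, ?_, ho⟩
      all_goals {
        have hends := ends_of_sigma_otherEnd hs ho
        have hsx : sigma tail head e x = 0 := by
          rcases hends with ⟨h1', h2'⟩ | ⟨h1', h2'⟩
          · exact sigma_eq_zero (by rw [h1']; exact hxy.symm) (by rw [h2']; exact hux)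
          · exact sigma_eq_zero (by rw [h2']; exact hux) (by rw [h1']; exact hxy.symm)
        simp only [negTwist, hsx, Int.cast_zero, sub_zero] at hm ⊢
        exact hm }
    rw [h1]
    have : (t.map fun y => (cnt tail head n (negTwist tail head n w x) y u : ℤ)).sum
        = (t.map fun y => (cnt tail head n w y u : ℤ)).sum := by
      congr 1
      exact List.map_congr_left (fun y hy => by rw [h2 y hy])
    rw [this, List.map_cons, List.sum_cons]
    ring

lemma sigma_subtype (tail head : E → V) (U : Finset V)
    (e : {e : E // tail e ∈ U ∧ head e ∈ U}) (x : {x // x ∈ U}) :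
    sigma (fun e : {e : E // tail e ∈ U ∧ head e ∈ U} => (⟨tail e.1, e.2.1⟩ : {x // x ∈ U}))
      (fun e => (⟨head e.1, e.2.2⟩ : {x // x ∈ U})) e x = sigma tail head e.1 x.1 := by
  unfold sigma
  simp only [Subtype.ext_iff]

lemma otherEnd_subtype (tail head : E → V) (U : Finset V)
    (e : {e : E // tail e ∈ U ∧ head e ∈ U}) (x : {x // x ∈ U}) :
    (otherEnd (fun e : {e : E // tail e ∈ U ∧ head e ∈ U} => (⟨tail e.1, e.2.1⟩ : {x // x ∈ U}))
      (fun e => (⟨head e.1, e.2.2⟩ : {x // x ∈ U})) e x).1 = otherEnd tail head e.1 x.1 := by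
  unfold otherEnd
  by_cases h : tail e.1 = x.1
  · rw [if_pos h, if_pos (Subtype.ext h)]
  · rw [if_neg h, if_neg (fun hc => h (congrArg Subtype.val hc))]

lemma cnt_subtype [Fintype V] [Fintype E] [DecidableEq V] [DecidableEq E] (tail head : E → V) (n : E → ℕ) (w : AdmMD V E n) (U : Finset V)
    (x u : {x // x ∈ U}) :
    cnt (fun e : {e : E // tail e ∈ U ∧ head e ∈ U} => (⟨tail e.1, e.2.1⟩ : {x // x ∈ U}))
        (fun e => (⟨head e.1, e.2.2⟩ : {x // x ∈ U})) (fun e => n e.1)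
        ⟨fun u => w.wV u.1, fun e => w.mu e.1⟩ x u
      = cnt tail head n w x.1 u.1 := by
  unfold cnt
  apply Finset.card_bij (fun e _ => e.1)
  · intro e he
    simp only [Finset.mem_filter, Finset.mem_univ, true_and] at he ⊢
    obtain ⟨h1, h2, h3⟩ := he
    rw [sigma_subtype] at h1
    refine ⟨h1, h2, ?_⟩
    rw [← otherEnd_subtype tail head U e x, h3]
  · intro e1 _ e2 _ h
    exact Subtype.ext h
  · intro e he
    simp only [Finset.mem_filter, Finset.mem_univ, true_and] at he
    obtain ⟨h1, h2, h3⟩ := he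
    have hends := ends_of_sigma_otherEnd h1 h3
    have hmem : tail e ∈ U ∧ head e ∈ U := by
      rcases hends with ⟨ha, hb⟩ | ⟨ha, hb⟩
      · exact ⟨ha ▸ x.2, hb ▸ u.2⟩
      · exact ⟨hb ▸ u.2, ha ▸ x.2⟩
    refine ⟨⟨e, hmem⟩, ?_, rfl⟩
    simp only [Finset.mem_filter, Finset.mem_univ, true_and]
    rw [sigma_subtype]
    refine ⟨h1, h2, ?_⟩
    apply Subtype.ext
    rw [otherEnd_subtype, h3]

lemma sum_map_filter_eq {α : Type*} (p : α → Bool) (f : α → ℤ)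
    (l : List α) (h : ∀ x ∈ l, ¬ p x → f x = 0) :
    ((l.filter p).map f).sum = (l.map f).sum := by
  induction l with
  | nil => simp
  | cons a t ih =>
    by_cases hp : p a
    · rw [List.filter_cons_of_pos hp, List.map_cons, List.sum_cons, List.map_cons,
        List.sum_cons, ih (fun x hx => h x (List.mem_cons_of_mem a hx))]
    · rw [List.filter_cons_of_neg (by simpa using hp), List.map_cons, List.sum_cons,
        h a (List.mem_cons_self) (by simpa using hp),
        ih (fun x hx => h x (List.mem_cons_of_mem a hx)), zero_add]

lemma idxOf_map_inj {α β : Type*} [BEq α] [LawfulBEq α] [BEq β] [LawfulBEq β] (f : α → β)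
    (hf : Function.Injective f) (l : List α) (a : α) :
    (l.map f).idxOf (f a) = l.idxOf a := by
  induction l with
  | nil => simp
  | cons b t ih =>
    by_cases hb : b = a
    · subst hb; simp [List.idxOf_cons_self]
    · rw [List.map_cons, List.idxOf_cons_ne _ (fun h => hb (hf h)),
        List.idxOf_cons_ne _ hb, ih]

lemma idxOf_lt_of_mem_take {α : Type*} [BEq α] [LawfulBEq α] {l : List α} {j : ℕ} {x : α}
    (hx : x ∈ l.take j) : l.idxOf x < j := by
  have h1 : l.idxOf x = (l.take j).idxOf x := by
    conv_lhs => rw [← List.take_append_drop j l]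
    rw [List.idxOf_append_of_mem hx]
  calc l.idxOf x = (l.take j).idxOf x := h1
    _ < (l.take j).length := List.idxOf_lt_length_iff.2 hx
    _ ≤ j := by simpa using List.length_take_le j l

lemma not_mem_take_idxOf {α : Type*} [BEq α] [LawfulBEq α] (l : List α) (x : α) :
    x ∉ l.take (l.idxOf x) := fun h => lt_irrefl _ (idxOf_lt_of_mem_take h)

end Aux


/-- on a multitree, an admissible multidegree concentrated at `v` and
nonnegative away from `v` remains concentrated at `v` upon restriction to any connected
induced subgraph containing `v`. -/
theorem statement_11 {V E : Type*} [Fintype V] [Fintype E] [DecidableEq V] [DecidableEq E]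
    (tail head : E → V) (n : E → ℕ)
    (hloop : Loopless tail head) (hconn : MGConnected tail head)
    (htree : (barGraph tail head).IsTree)
    (hn : ∀ e, 0 < n e)
    (w : AdmMD V E n) (v : V)
    (hconc : Concentrated tail head n w v)
    (hnn : ∀ v' : V, v' ≠ v → 0 ≤ w.wV v')
    (U : Finset V) (hvU : v ∈ U)
    (hUconn : MGConnected
      (fun e : {e : E // tail e ∈ U ∧ head e ∈ U} => (⟨tail e.1, e.2.1⟩ : {x // x ∈ U}))
      (fun e : {e : E // tail e ∈ U ∧ head e ∈ U} =>
        (⟨head e.1, e.2.2⟩ : {x // x ∈ U}))) :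
    Concentrated
      (fun e : {e : E // tail e ∈ U ∧ head e ∈ U} => (⟨tail e.1, e.2.1⟩ : {x // x ∈ U}))
      (fun e : {e : E // tail e ∈ U ∧ head e ∈ U} => (⟨head e.1, e.2.2⟩ : {x // x ∈ U}))
      (fun e : {e : E // tail e ∈ U ∧ head e ∈ U} => n e.1)
      ⟨fun u => w.wV u.1, fun e => w.mu e.1⟩
      ⟨v, hvU⟩ := by
  classical
  obtain ⟨l, hnd, hall, hhead, hneg⟩ := hconc
  set G := barGraph tail head with hG
  -- l is nonempty with head v
  have hget0 : ∀ (h : 0 < l.length), l.get ⟨0, h⟩ = v := by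
    cases l with
    | nil => intro h; simp at h
    | cons a t => intro h; simpa using hhead
  -- predecessor: every vertex other than v has a neighbor earlier in the list
  have pred : ∀ y : V, y ≠ v → ∃ z : V, G.Adj y z ∧ l.idxOf z < l.idxOf y := by
    intro y hyv
    have hyl : y ∈ l := hall y
    have hjlen : l.idxOf y < l.length := List.idxOf_lt_length_iff.2 hyl
    have hj0 : 0 < l.idxOf y := by
      rcases Nat.eq_zero_or_pos (l.idxOf y) with h | h
      · exfalso
        apply hyv
        have hgy : l.get ⟨l.idxOf y, hjlen⟩ = y := List.idxOf_get hjlen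
        have hgv := hget0 (lt_of_le_of_lt (Nat.zero_le _) hjlen)
        rw [← hgy, ← hgv]
        congr 1
        exact Fin.ext h
      · exact h
    have hAneg := hneg (l.idxOf y) hjlen hj0
    rw [List.idxOf_get hjlen] at hAneg
    rw [foldl_negTwist_wV tail head n (l.take (l.idxOf y)) w y
      (not_mem_take_idxOf l y) ((List.take_sublist _ _).nodup hnd)] at hAneg
    have hsum : 0 < ((l.take (l.idxOf y)).map fun x =>
        (cnt tail head n w x y : ℤ)).sum := by
      have := hnn y hyv
      linarith
    have hex : ∃ x ∈ l.take (l.idxOf y), 0 < cnt tail head n w x y := by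
      by_contra hc
      push_neg at hc
      have : ((l.take (l.idxOf y)).map fun x => (cnt tail head n w x y : ℤ)).sum = 0 := by
        apply List.sum_eq_zero
        intro a ha
        obtain ⟨x, hx, rfl⟩ := List.mem_map.1 ha
        have := hc x hx
        omega
      omega
    obtain ⟨x, hxt, hcx⟩ := hex
    obtain ⟨e, he⟩ := Finset.card_pos.1 hcx
    simp only [Finset.mem_filter, Finset.mem_univ, true_and] at he
    obtain ⟨hs, hm, ho⟩ := he
    have hends := ends_of_sigma_otherEnd hs ho
    have hne : y ≠ x := by
      rcases hends with ⟨h1, h2⟩ | ⟨h1, h2⟩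
      · exact fun h => hloop e (h1.trans (h ▸ h2.symm))
      · exact fun h => hloop e (h2.trans (h ▸ h1).symm)
    refine ⟨x, ⟨hne, e, ?_⟩, idxOf_lt_of_mem_take hxt⟩
    rcases hends with ⟨h1, h2⟩ | ⟨h1, h2⟩
    · exact Or.inr ⟨h1, h2⟩
    · exact Or.inl ⟨h2, h1⟩
  -- walk with low indices from any vertex to v
  have walkLow : ∀ (N : ℕ) (y : V), l.idxOf y ≤ N →
      ∃ p : G.Walk y v, ∀ z ∈ p.support, l.idxOf z ≤ l.idxOf y := by
    intro N
    induction N with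
    | zero =>
      intro y hy
      have hy0 : l.idxOf y = 0 := Nat.le_zero.1 hy
      have hyl : y ∈ l := hall y
      have hjlen : l.idxOf y < l.length := List.idxOf_lt_length_iff.2 hyl
      have hyv : y = v := by
        have hgy : l.get ⟨l.idxOf y, hjlen⟩ = y := List.idxOf_get hjlen
        have hgv := hget0 (lt_of_le_of_lt (Nat.zero_le _) hjlen)
        rw [← hgy, ← hgv]
        congr 1
        exact Fin.ext hy0
      subst hyv
      exact ⟨SimpleGraph.Walk.nil, by intro z hz; simp at hz; simp [hz]⟩
    | succ N ih =>
      intro y hy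
      by_cases hyv : y = v
      · subst hyv
        exact ⟨SimpleGraph.Walk.nil, by intro z hz; simp at hz; simp [hz]⟩
      · obtain ⟨z, hadj, hlt⟩ := pred y hyv
        obtain ⟨p, hp⟩ := ih z (by omega)
        exact ⟨SimpleGraph.Walk.cons hadj p, by
          intro z' hz'
          rw [SimpleGraph.Walk.support_cons] at hz'
          rcases List.mem_cons.1 hz' with h | h
          · subst h; exact le_rfl
          · exact le_trans (hp z' h) (le_of_lt hlt)⟩
  -- walk inside U from any vertex of U to v
  have walkU : ∀ a b : {x // x ∈ U}, Relation.ReflTransGen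
      (fun p q : {x // x ∈ U} => ∃ e : {e : E // tail e ∈ U ∧ head e ∈ U},
        ((⟨tail e.1, e.2.1⟩ : {x // x ∈ U}) = p ∧ (⟨head e.1, e.2.2⟩ : {x // x ∈ U}) = q) ∨
        ((⟨tail e.1, e.2.1⟩ : {x // x ∈ U}) = q ∧ (⟨head e.1, e.2.2⟩ : {x // x ∈ U}) = p))
      a b →
      ∃ p : G.Walk a.1 b.1, ∀ z ∈ p.support, z ∈ U := by
    intro a b h
    induction h with
    | refl =>
      exact ⟨SimpleGraph.Walk.nil, by intro z hz; simp at hz; rw [hz]; exact a.2⟩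
    | @tail b' c h1 h2 ih =>
      obtain ⟨p, hp⟩ := ih
      obtain ⟨e, he⟩ := h2
      have hvals : (tail e.1 = b'.1 ∧ head e.1 = c.1) ∨
          (tail e.1 = c.1 ∧ head e.1 = b'.1) := by
        rcases he with ⟨ha, hb⟩ | ⟨ha, hb⟩
        · exact Or.inl ⟨congrArg Subtype.val ha, congrArg Subtype.val hb⟩
        · exact Or.inr ⟨congrArg Subtype.val ha, congrArg Subtype.val hb⟩
      have hne : b'.1 ≠ c.1 := by
        rcases hvals with ⟨ha, hb⟩ | ⟨ha, hb⟩
        · exact fun h => hloop e.1 (ha.trans (h.trans hb.symm))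
        · exact fun h => hloop e.1 (ha.trans (h.symm.trans hb.symm))
      have hadj : G.Adj b'.1 c.1 := by
        refine ⟨hne, e.1, ?_⟩
        rcases hvals with ⟨ha, hb⟩ | ⟨ha, hb⟩
        · exact Or.inl ⟨ha, hb⟩
        · exact Or.inr ⟨ha, hb⟩
      refine ⟨p.concat hadj, ?_⟩
      intro z hz
      rw [SimpleGraph.Walk.support_concat] at hz
      rcases List.mem_append.1 hz with h | h
      · exact hp z h
      · rw [List.mem_singleton.1 h]; exact c.2
  -- cnt vanishes on out-of-U earlier vertices
  have cntzero : ∀ u : V, u ∈ U → u ≠ v → ∀ x ∈ l.take (l.idxOf u), x ∉ U →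
      cnt tail head n w x u = 0 := by
    intro u huU huv x hxt hxU
    by_contra hc
    obtain ⟨e, he⟩ := Finset.card_pos.1 (Nat.pos_of_ne_zero hc)
    simp only [Finset.mem_filter, Finset.mem_univ, true_and] at he
    obtain ⟨hs, hm, ho⟩ := he
    have hends := ends_of_sigma_otherEnd hs ho
    have hne : x ≠ u := by
      rcases hends with ⟨h1, h2⟩ | ⟨h1, h2⟩
      · exact fun h => hloop e (h1.trans (h.trans h2.symm))
      · exact fun h => hloop e (h2.trans (h.symm.trans h1.symm))
    have hadjxu : G.Adj x u := by
      refine ⟨hne, e, ?_⟩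
      rcases hends with ⟨h1, h2⟩ | ⟨h1, h2⟩
      · exact Or.inl ⟨h1, h2⟩
      · exact Or.inr ⟨h2, h1⟩
    have hposx : l.idxOf x < l.idxOf u := idxOf_lt_of_mem_take hxt
    obtain ⟨p1, hp1⟩ := walkLow (l.idxOf x) x le_rfl
    have hu1 : u ∉ p1.support := fun h => absurd (hp1 u h) (by omega)
    obtain ⟨p2, hp2⟩ := walkU ⟨u, huU⟩ ⟨v, hvU⟩ (hUconn ⟨u, huU⟩ ⟨v, hvU⟩)
    have hx2 : x ∉ p2.support := fun h => hxU (hp2 x h)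
    have hq1path : p1.bypass.IsPath := SimpleGraph.Walk.bypass_isPath p1
    have hu_q1 : u ∉ p1.bypass.support :=
      fun h => hu1 (SimpleGraph.Walk.support_bypass_subset _ h)
    have hq2path : p2.bypass.IsPath := SimpleGraph.Walk.bypass_isPath p2
    have hx_q2 : x ∉ p2.bypass.support :=
      fun h => hx2 (SimpleGraph.Walk.support_bypass_subset _ h)
    have hq3path : (SimpleGraph.Walk.cons hadjxu p2.bypass).IsPath := hq2path.cons hx_q2
    have heq : p1.bypass = SimpleGraph.Walk.cons hadjxu p2.bypass :=
      (htree.existsUnique_path x v).unique hq1path hq3path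
    apply hu_q1
    rw [heq, SimpleGraph.Walk.support_cons]
    exact List.mem_cons_of_mem _ (SimpleGraph.Walk.start_mem_support _)
  -- build the list for the subgraph
  set lf : List V := l.filter (fun x => decide (x ∈ U)) with hlf
  have hmemlf : ∀ x ∈ lf, x ∈ U := by
    intro x hx
    exact of_decide_eq_true (List.mem_filter.1 hx).2
  set l' : List {x // x ∈ U} :=
    lf.attach.map (fun x => ⟨x.1, hmemlf x.1 x.2⟩) with hl'
  have hval : l'.map Subtype.val = lf := by
    rw [hl', List.map_map]
    have h1 : (Subtype.val ∘ fun x : {x // x ∈ lf} =>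
        (⟨x.1, hmemlf x.1 x.2⟩ : {x // x ∈ U})) = fun x : {x // x ∈ lf} => x.1 := rfl
    rw [h1]
    simp
  have hlfnd : lf.Nodup := hnd.filter _
  have hnd' : l'.Nodup := (hval ▸ hlfnd).of_map Subtype.val
  have hall' : ∀ x' : {x // x ∈ U}, x' ∈ l' := by
    intro x'
    have h1 : x'.1 ∈ lf := List.mem_filter.2 ⟨hall x'.1, decide_eq_true x'.2⟩
    rw [← hval] at h1
    obtain ⟨y, hy, hyv⟩ := List.mem_map.1 h1
    exact (Subtype.ext hyv : y = x') ▸ hy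
  have hhead' : l'.head? = some ⟨v, hvU⟩ := by
    have hlfhead : lf.head? = some v := by
      rw [hlf]
      cases hc : l with
      | nil => rw [hc] at hhead; simp at hhead
      | cons a t =>
        have hav : a = v := by rw [hc] at hhead; simpa using hhead
        rw [hav]
        simp [List.filter_cons, hvU]
    rw [← hval] at hlfhead
    cases hl'' : l' with
    | nil => rw [hl''] at hlfhead; simp at hlfhead
    | cons a t =>
      rw [hl''] at hlfhead
      simp only [List.map_cons, List.head?_cons, Option.some.injEq] at hlfhead
      have ha2 : a = ⟨v, hvU⟩ := Subtype.ext hlfhead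
      rw [List.head?_cons, ha2]
  refine ⟨l', hnd', hall', hhead', ?_⟩
  intro i hi hi0
  set u' := l'.get ⟨i, hi⟩ with hu'
  have hiu' : l'.idxOf u' = i := by
    rw [hu', List.get_eq_getElem]
    exact hnd'.idxOf_getElem i hi
  have hnt : u' ∉ l'.take i := by
    intro h
    have := idxOf_lt_of_mem_take h
    omega
  rw [foldl_negTwist_wV _ _ _ (l'.take i) _ u' hnt ((List.take_sublist _ _).nodup hnd')]
  have hcnteq : ((l'.take i).map fun x' =>
      ((cnt (fun e : {e : E // tail e ∈ U ∧ head e ∈ U} => (⟨tail e.1, e.2.1⟩ : {x // x ∈ U}))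
        (fun e : {e : E // tail e ∈ U ∧ head e ∈ U} => (⟨head e.1, e.2.2⟩ : {x // x ∈ U}))
        (fun e : {e : E // tail e ∈ U ∧ head e ∈ U} => n e.1)
        ⟨fun u => w.wV u.1, fun e => w.mu e.1⟩ x' u' : ℕ) : ℤ)).sum
      = ((l'.take i).map fun x' => ((cnt tail head n w x'.1 u'.1 : ℕ) : ℤ)).sum := by
    congr 1
    apply List.map_congr_left
    intro x' _
    rw [cnt_subtype]
  rw [hcnteq]
  -- replace sum over l'.take i by sum over (l.take j) where j = idxOf u'.1
  have huv : u'.1 ≠ v := by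
    intro h
    have h0 : (0 : ℕ) < l'.length := lt_of_le_of_lt (Nat.zero_le i) hi
    have hget0' : l'.get ⟨0, h0⟩ = ⟨v, hvU⟩ := by
      have h1 : l'.head? = l'[0]? := List.head?_eq_getElem?
      rw [hhead', List.getElem?_eq_getElem h0] at h1
      simpa using h1.symm
    have : u' = l'.get ⟨0, h0⟩ := by rw [hget0']; exact Subtype.ext h
    rw [hu'] at this
    have := (hnd'.get_inj_iff).1 this.symm
    simp only [Fin.mk.injEq] at this
    omega
  set j := l.idxOf u'.1 with hj
  have hul : u'.1 ∈ l := hall u'.1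
  have hjlen : j < l.length := List.idxOf_lt_length_iff.2 hul
  have hjget : l.get ⟨j, hjlen⟩ = u'.1 := List.idxOf_get hjlen
  have hj0 : 0 < j := by
    rcases Nat.eq_zero_or_pos j with h | h
    · exfalso
      apply huv
      have hgv := hget0 (lt_of_le_of_lt (Nat.zero_le _) hjlen)
      rw [← hjget, ← hgv]
      congr 1
      exact Fin.ext h
    · exact h
  have hjtake : u'.1 ∉ l.take j := not_mem_take_idxOf l u'.1
  -- split lf around u'.1
  have hlf_split : lf = (l.take j).filter (fun x => decide (x ∈ U))
      ++ u'.1 :: (l.drop (j + 1)).filter (fun x => decide (x ∈ U)) := by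
    conv_lhs => rw [hlf, ← List.take_append_drop j l]
    rw [List.filter_append]
    congr 1
    have hg : l[j] = u'.1 := by rw [List.get_eq_getElem] at hjget; exact hjget
    have hdrop : l.drop j = u'.1 :: l.drop (j + 1) := by
      rw [List.drop_eq_getElem_cons hjlen, hg]
    rw [hdrop]
    simp [List.filter_cons, u'.2]
  have hiu : i = ((l.take j).filter (fun x => decide (x ∈ U))).length := by
    have h2 : lf.idxOf u'.1 = l'.idxOf u' := by
      rw [← hval]
      exact idxOf_map_inj Subtype.val Subtype.val_injective l' u'
    have h3 : lf.idxOf u'.1 = ((l.take j).filter (fun x => decide (x ∈ U))).length := by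
      rw [hlf_split, List.idxOf_append_of_notMem
        (fun hm => hjtake (List.mem_of_mem_filter hm)), List.idxOf_cons_self]
      omega
    omega
  have htake' : (l'.take i).map Subtype.val
      = (l.take j).filter (fun x => decide (x ∈ U)) := by
    rw [List.map_take, hval, hlf_split, hiu]
    exact List.take_left
  have hsum2 : ((l'.take i).map fun x' => ((cnt tail head n w x'.1 u'.1 : ℕ) : ℤ)).sum
      = (((l.take j).filter (fun x => decide (x ∈ U))).map
          fun x => ((cnt tail head n w x u'.1 : ℕ) : ℤ)).sum := by
    rw [← htake', List.map_map]
    rfl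
  have hsum3 : (((l.take j).filter (fun x => decide (x ∈ U))).map
        fun x => ((cnt tail head n w x u'.1 : ℕ) : ℤ)).sum
      = ((l.take j).map fun x => ((cnt tail head n w x u'.1 : ℕ) : ℤ)).sum := by
    apply sum_map_filter_eq
    intro x hx hxU
    have : x ∉ U := fun h => hxU (decide_eq_true h)
    rw [cntzero u'.1 u'.2 huv x hx this]
    rfl
  have hAneg := hneg j hjlen hj0
  rw [hjget] at hAneg
  rw [foldl_negTwist_wV tail head n (l.take j) w u'.1 hjtake
    ((List.take_sublist _ _).nodup hnd)] at hAneg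
  have hwv : (AdmMD.mk (fun u : {x // x ∈ U} => w.wV u.1)
      (fun e : {e : E // tail e ∈ U ∧ head e ∈ U} => w.mu e.1)).wV u' = w.wV u'.1 := rfl
  rw [hwv, hsum2, hsum3]
  exact hAneg


end LLS
end
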